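/- arXiv:2505.00258 — 10 statements merged into one kernel-verified Lean document; each statement's English description precedes it below -/
import Mathlib

section
/- Let 0 < q < 1 − β with qm and βm integers. Suppose x* ∈ ℝⁿ satisfies A x* = b_t and b = b_t + ξ where ‖ξ‖₀ ≤ βm. Then for any x_k ∈ ℝⁿ, the q-quantile Q of the residual magnitudes satisfies Q ≤ σ_max(A)·‖x_k − x*‖ / (√m · √(1 − q − β)). -/
open Finset

/-- Largest singular value of `A`, as the operator norm of the associated
Euclidean linear map. -/
noncomputable def sigmaMax {m n : ℕ} (A : Matrix (Fin m) (Fin n) ℝ) : ℝ :=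
  ‖LinearMap.toContinuousLinearMap (Matrix.toEuclideanLin A)‖

/-- `sigmaSMin A k` is the minimum over all index sets `I` of cardinality `k`
of the smallest value of `‖A_I x‖` over unit vectors `x`. -/
noncomputable def sigmaSMin {m n : ℕ} (A : Matrix (Fin m) (Fin n) ℝ) (k : ℕ) : ℝ :=
  sInf {t : ℝ | ∃ I : Finset (Fin m), I.card = k ∧
    t = sInf {u : ℝ | ∃ x : EuclideanSpace ℝ (Fin n), ‖x‖ = 1 ∧
      u = Real.sqrt (∑ i ∈ I, (A.mulVec (fun k => x k) i) ^ 2)}}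

/-- The `j`-th row of `A`, as a vector in Euclidean space. -/
noncomputable def row {m n : ℕ} (A : Matrix (Fin m) (Fin n) ℝ) (j : Fin m) :
    EuclideanSpace ℝ (Fin n) := WithLp.toLp 2 (fun k => A j k)

/-- Residual `r_j = b_j - ⟨x, a_j⟩`. -/
noncomputable def resid {m n : ℕ} (A : Matrix (Fin m) (Fin n) ℝ) (b : Fin m → ℝ)
    (x : EuclideanSpace ℝ (Fin n)) (j : Fin m) : ℝ :=
  b j - ∑ k, x k * A j k

/-- `IsQuantile f k Q` says `Q` is the `k`-th smallest value (1-indexed,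
counted with multiplicity) of the multiset `{f j}`. -/
def IsQuantile {m : ℕ} (f : Fin m → ℝ) (k : ℕ) (Q : ℝ) : Prop :=
  k ≤ (Finset.univ.filter fun j => f j ≤ Q).card ∧
  (Finset.univ.filter fun j => f j < Q).card < k

lemma normBound_aux {m n : ℕ} (A : Matrix (Fin m) (Fin n) ℝ)
    (x y : EuclideanSpace ℝ (Fin n)) :
    Real.sqrt (∑ j, (A.mulVec (fun k => x k - y k) j) ^ 2) ≤ sigmaMax A * ‖x - y‖ := by
  set e : EuclideanSpace ℝ (Fin m) :=
    (WithLp.equiv 2 (Fin m → ℝ)).symm (A.mulVec (fun k => x k - y k)) with he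
  have h1 : Matrix.toEuclideanLin A (x - y) = e := rfl
  have h2 : ‖Matrix.toEuclideanLin A (x - y)‖ ≤ sigmaMax A * ‖x - y‖ := by
    have := (LinearMap.toContinuousLinearMap (Matrix.toEuclideanLin A)).le_opNorm (x - y)
    simpa [sigmaMax] using this
  rw [h1] at h2
  have h3 : ‖e‖ = Real.sqrt (∑ j, (A.mulVec (fun k => x k - y k) j) ^ 2) := by
    rw [EuclideanSpace.norm_eq]
    congr 1
    refine Finset.sum_congr rfl fun j _ => ?_
    rw [Real.norm_eq_abs, sq_abs]
    rfl
  linarith [h3 ▸ h2]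

theorem qrk_quantile_bound
    {m n : ℕ} (A : Matrix (Fin m) (Fin n) ℝ)
    (q β : ℝ) (kq kβ : ℕ)
    (hm : 0 < m) (hmn : n ≤ m) (hrank : A.rank = n)
    (hrow : ∀ j, ∑ k, (A j k) ^ 2 = 1)
    (hq0 : 0 < q) (hq1 : q < 1 - β)
    (hkq : (kq : ℝ) = q * m) (hkβ : (kβ : ℝ) = β * m)
    (xstar : EuclideanSpace ℝ (Fin n)) (bt b ξ : Fin m → ℝ)
    (hsol : A.mulVec (fun k => xstar k) = bt)
    (hb : b = bt + ξ)
    (hsparse : (Finset.univ.filter fun j => ξ j ≠ 0).card ≤ kβ)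
    (xk : EuclideanSpace ℝ (Fin n)) (Q : ℝ)
    (hQ : IsQuantile (fun j => |resid A b xk j|) kq Q) :
    Q ≤ sigmaMax A * ‖xk - xstar‖ / (Real.sqrt m * Real.sqrt (1 - q - β)) := by
  obtain ⟨hQ1, hQ2⟩ := hQ
  simp only at hQ1 hQ2
  set v : Fin m → ℝ := A.mulVec (fun k => xk k - xstar k) with hv
  -- residual formula on clean rows
  have hres : ∀ j, resid A b xk j = ξ j - v j := by
    intro j
    have hm1 : A.mulVec (fun k => xk k - xstar k) j
        = A.mulVec (fun k => xk k) j - A.mulVec (fun k => xstar k) j := by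
      simp [Matrix.mulVec, dotProduct, mul_sub, Finset.sum_sub_distrib]
    have : (∑ k, xk k * A j k) = A.mulVec (fun k => xk k) j := by
      simp [Matrix.mulVec, dotProduct, mul_comm]
    simp only [resid, hb, Pi.add_apply, ← hsol, this, hv, hm1]
    ring
  -- kq positive
  have hkqpos : 0 < kq := by
    by_contra h
    push_neg at h
    interval_cases kq
    · simp at hkq
      rcases hkq with h | h
      · exact absurd h (ne_of_gt hq0)
      · exact absurd h (by positivity)
  -- Q nonneg
  have hQ0 : 0 ≤ Q := by
    have : (Finset.univ.filter fun j => |resid A b xk j| ≤ Q).Nonempty := by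
      rw [← Finset.card_pos]
      exact lt_of_lt_of_le hkqpos hQ1
    obtain ⟨j, hj⟩ := this
    have := (Finset.mem_filter.mp hj).2
    exact le_trans (abs_nonneg _) this
  -- the good set
  set T : Finset (Fin m) := Finset.univ.filter fun j => ¬ |resid A b xk j| < Q with hT
  set S : Finset (Fin m) := T.filter fun j => ξ j = 0 with hS
  have hcardT : m - (kq - 1) ≤ T.card := by
    have hsplit : (Finset.univ.filter fun j => |resid A b xk j| < Q).card
        + (Finset.univ.filter fun j => ¬ |resid A b xk j| < Q).card = m := by
      rw [Finset.card_filter_add_card_filter_not, Finset.card_univ,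
        Fintype.card_fin]
    rw [hT]
    omega
  have hcardS : T.card ≤ S.card + kβ := by
    have hsplit2 : (T.filter fun j => ξ j = 0).card
        + (T.filter fun j => ¬ ξ j = 0).card = T.card :=
      Finset.card_filter_add_card_filter_not _
    calc T.card ≤ S.card + (T.filter fun j => ¬ ξ j = 0).card := by
          rw [hS]; omega
      _ ≤ S.card + kβ := by
          refine Nat.add_le_add_left (le_trans (Finset.card_le_card ?_) hsparse) _
          intro j hj
          simp only [Finset.mem_filter, ne_eq] at hj ⊢
          exact ⟨Finset.mem_univ j, hj.2⟩
  -- card S > (1-q-β) m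
  have hScard : (1 - q - β) * m < (S.card : ℝ) := by
    have h1 : (m : ℝ) - kq - kβ < (S.card : ℝ) := by
      have : m - (kq - 1) ≤ S.card + kβ := le_trans hcardT hcardS
      have hm0 : (0:ℝ) < m := by exact_mod_cast hm
      have hβ0 : 0 ≤ β := by
        have hb0 : (0:ℝ) ≤ β * m := hkβ ▸ (Nat.cast_nonneg kβ : (0:ℝ) ≤ kβ)
        exact (mul_le_mul_iff_of_pos_right hm0).mp (by linarith)
      have h2 : (kq : ℝ) ≤ m := by
        rw [hkq]
        calc q * (m:ℝ) ≤ 1 * m := mul_le_mul_of_nonneg_right (by linarith) hm0.le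
          _ = m := one_mul _
      have h3 : kq ≤ m := by exact_mod_cast h2
      have : m - kq + 1 ≤ S.card + kβ := by omega
      have h4 : ((m - kq + 1 : ℕ) : ℝ) ≤ (S.card : ℝ) + kβ := by
        exact_mod_cast Nat.cast_le.mpr this
      push_cast [h3] at h4
      linarith
    rw [hkq, hkβ] at h1
    have : (1 - q - β) * (m:ℝ) = m - q * m - β * m := by ring
    linarith
  -- on S, Q ≤ |v j|
  have hQv : ∀ j ∈ S, Q ^ 2 ≤ (v j) ^ 2 := by
    intro j hj
    simp only [hS, hT, Finset.mem_filter, not_lt] at hj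
    obtain ⟨⟨_, h1⟩, h2⟩ := hj
    have : |resid A b xk j| = |v j| := by rw [hres j, h2]; simp [abs_sub_comm]
    have hq : Q ≤ |v j| := this ▸ h1
    calc Q ^ 2 ≤ |v j| ^ 2 := pow_le_pow_left₀ hQ0 hq 2
      _ = (v j) ^ 2 := sq_abs _
  have hnorm : Real.sqrt (∑ j, (v j) ^ 2) ≤ sigmaMax A * ‖xk - xstar‖ := by
    rw [hv]
    exact normBound_aux A xk xstar
  -- combine
  have hsum : (S.card : ℝ) * Q ^ 2 ≤ ∑ j, (v j) ^ 2 := by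
    calc (S.card : ℝ) * Q ^ 2 = ∑ _j ∈ S, Q ^ 2 := by
          rw [Finset.sum_const, nsmul_eq_mul]
      _ ≤ ∑ j ∈ S, (v j) ^ 2 := Finset.sum_le_sum hQv
      _ ≤ ∑ j, (v j) ^ 2 := Finset.sum_le_sum_of_subset_of_nonneg
          (Finset.subset_univ _) (fun j _ _ => sq_nonneg _)
  have hc : 0 < (1 - q - β) * m := by
    have hm0 : (0:ℝ) < m := by exact_mod_cast hm
    exact mul_pos (by linarith) hm0
  have key : Q ^ 2 * ((1 - q - β) * m) ≤ (sigmaMax A * ‖xk - xstar‖) ^ 2 := by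
    have h1 : Q ^ 2 * ((1 - q - β) * m) ≤ Q ^ 2 * S.card :=
      mul_le_mul_of_nonneg_left hScard.le (sq_nonneg Q)
    have h2 : (∑ j, (v j) ^ 2) ≤ (sigmaMax A * ‖xk - xstar‖) ^ 2 := by
      have hnn : 0 ≤ ∑ j, (v j) ^ 2 := Finset.sum_nonneg fun j _ => sq_nonneg _
      have := pow_le_pow_left₀ (Real.sqrt_nonneg _) hnorm 2
      rwa [Real.sq_sqrt hnn] at this
    linarith
  -- finish
  have hden : Real.sqrt m * Real.sqrt (1 - q - β) = Real.sqrt ((1 - q - β) * m) := by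
    rw [← Real.sqrt_mul (by exact_mod_cast hm.le), mul_comm]
  rw [hden, le_div_iff₀ (Real.sqrt_pos.mpr hc)]
  have : (Q * Real.sqrt ((1 - q - β) * m)) ^ 2 ≤ (sigmaMax A * ‖xk - xstar‖) ^ 2 := by
    rw [mul_pow, Real.sq_sqrt hc.le]
    exact key
  have hrhs : 0 ≤ sigmaMax A * ‖xk - xstar‖ := by
    apply mul_nonneg _ (norm_nonneg _)
    exact norm_nonneg _
  have h5 := Real.sqrt_le_sqrt this
  rwa [Real.sqrt_sq (mul_nonneg hQ0 (Real.sqrt_nonneg _)), Real.sqrt_sq hrhs] at h5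
end

section
/- Let 0 < q < 1 − β with qm and βm integers. Suppose A x* = b_t and b = b_t + ξ with ‖ξ‖₀ ≤ βm. For any x_k ∈ ℝⁿ, if the set S := {j ∈ supp(ξ) : |r_j| ≤ Q} is nonempty, then the average (1/|S|) Σ_{i∈S} ‖(x_k + r_i a_i) − x*‖² is at most 2·(1 + σ_max(A)²/(m(1 − q − β)))·‖x_k − x*‖². -/
open Finset

theorem qrk_corrupt_rows_bound
    {m n : ℕ} (A : Matrix (Fin m) (Fin n) ℝ)
    (q β : ℝ) (kq kβ : ℕ)
    (hm : 0 < m) (hmn : n ≤ m) (hrank : A.rank = n)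
    (hrow : ∀ j, ∑ k, (A j k) ^ 2 = 1)
    (hq0 : 0 < q) (hq1 : q < 1 - β)
    (hkq : (kq : ℝ) = q * m) (hkβ : (kβ : ℝ) = β * m)
    (xstar : EuclideanSpace ℝ (Fin n)) (bt b ξ : Fin m → ℝ)
    (hsol : A.mulVec (fun k => xstar k) = bt)
    (hb : b = bt + ξ)
    (hsparse : (Finset.univ.filter fun j => ξ j ≠ 0).card ≤ kβ)
    (xk : EuclideanSpace ℝ (Fin n)) (Q : ℝ)
    (hQ : IsQuantile (fun j => |resid A b xk j|) kq Q)
    (S : Finset (Fin m))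
    (hS : S = Finset.univ.filter fun j => ξ j ≠ 0 ∧ |resid A b xk j| ≤ Q)
    (hSne : S.Nonempty) :
    (1 / (S.card : ℝ)) * ∑ i ∈ S, ‖(xk + resid A b xk i • row A i) - xstar‖ ^ 2 ≤
      2 * (1 + sigmaMax A ^ 2 / (m * (1 - q - β))) * ‖xk - xstar‖ ^ 2 := by
  set D : ℝ := ‖xk - xstar‖ with hD
  set r : Fin m → ℝ := resid A b xk with hr
  set v : EuclideanSpace ℝ (Fin n) := xstar - xk with hv
  have hc : (0:ℝ) < m * (1 - q - β) := by
    have : (0:ℝ) < m := Nat.cast_pos.mpr hm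
    nlinarith
  -- Q nonneg
  have hQ0 : 0 ≤ Q := by
    obtain ⟨i, hi⟩ := hSne
    rw [hS, Finset.mem_filter] at hi
    exact le_trans (abs_nonneg _) hi.2.2
  -- residual equals A(x*-xk) on uncorrupted rows
  have hres : ∀ j, ξ j = 0 → r j = A.mulVec (fun k => v k) j := by
    intro j hj
    have hvk : ∀ k, v k = xstar k - xk k := fun k => rfl
    simp only [hr, resid, hb, Pi.add_apply, hj, add_zero, ← hsol, Matrix.mulVec,
      dotProduct, hvk, mul_sub, Finset.sum_sub_distrib]
    congr 1
    exact Finset.sum_congr rfl fun k _ => by ring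
  -- norm of A(x*-xk) bounded by sigmaMax * D
  have hAv : ∑ j, (A.mulVec (fun k => v k) j)^2 ≤ sigmaMax A ^ 2 * D ^ 2 := by
    have h1 : Matrix.toEuclideanLin A v = fun j => A.mulVec (fun k => v k) j := rfl
    have h2 : ‖Matrix.toEuclideanLin A v‖^2 = ∑ j, (A.mulVec (fun k => v k) j)^2 := by
      rw [EuclideanSpace.norm_eq, Real.sq_sqrt (by positivity)]
      exact Finset.sum_congr rfl fun j _ => by rw [h1]; simp [Real.norm_eq_abs, sq_abs]
    have h3 : ‖Matrix.toEuclideanLin A v‖ ≤ sigmaMax A * ‖v‖ := by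
      have := (LinearMap.toContinuousLinearMap (Matrix.toEuclideanLin A)).le_opNorm v
      simpa [sigmaMax] using this
    have hvD : ‖v‖ = D := by rw [hv, hD, norm_sub_rev]
    rw [← h2]
    calc ‖Matrix.toEuclideanLin A v‖^2 ≤ (sigmaMax A * ‖v‖)^2 := by
          have hσ : 0 ≤ sigmaMax A := by unfold sigmaMax; exact norm_nonneg _
          apply sq_le_sq' _ h3
          exact le_trans (neg_nonpos.mpr (mul_nonneg hσ (norm_nonneg _))) (norm_nonneg _)
      _ = sigmaMax A ^2 * D^2 := by rw [hvD]; ring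
  -- counting : many uncorrupted rows with |r j| ≥ Q
  have key : Q^2 * (m * (1 - q - β)) ≤ sigmaMax A ^ 2 * D ^ 2 := by
    set U : Finset (Fin m) := Finset.univ.filter (fun j => ξ j = 0 ∧ Q ≤ |r j|) with hU
    have hcardU : (m : ℝ) * (1 - q - β) ≤ (U.card : ℝ) := by
      have hWF : (Finset.univ.filter (fun j => Q ≤ |r j|)).card
          + (Finset.univ.filter (fun j => ¬ Q ≤ |r j|)).card = m := by
        rw [Finset.card_filter_add_card_filter_not]; simp
      have hlt : (Finset.univ.filter (fun j => ¬ Q ≤ |r j|)).card < kq := by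
        have := hQ.2
        simpa [not_le] using this
      have hsplit : (Finset.univ.filter (fun j => Q ≤ |r j|)).card ≤
          U.card + (Finset.univ.filter fun j => ξ j ≠ 0).card := by
        have hsub : (Finset.univ.filter (fun j => Q ≤ |r j|)) ⊆
            U ∪ (Finset.univ.filter fun j => ξ j ≠ 0) := by
          intro j hj
          rw [Finset.mem_filter] at hj
          by_cases hξ : ξ j = 0
          · exact Finset.mem_union_left _ (by simp [hU, hξ, hj.2])
          · exact Finset.mem_union_right _ (by simp [hξ])
        exact le_trans (Finset.card_le_card hsub) (Finset.card_union_le _ _)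
      have h1 : m ≤ U.card + kβ + kq := by omega
      have : (m:ℝ) ≤ (U.card : ℝ) + β * m + q * m := by
        have := (Nat.cast_le (α := ℝ)).mpr h1
        push_cast at this
        linarith [this, hkq, hkβ]
      nlinarith
    have hsum : (U.card : ℝ) * Q^2 ≤ ∑ j, (A.mulVec (fun k => v k) j)^2 := by
      calc (U.card : ℝ) * Q^2 = ∑ j ∈ U, Q^2 := by rw [Finset.sum_const, nsmul_eq_mul]
        _ ≤ ∑ j ∈ U, (A.mulVec (fun k => v k) j)^2 := by
            apply Finset.sum_le_sum
            intro j hj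
            rw [hU, Finset.mem_filter] at hj
            rw [← hres j hj.2.1]
            calc Q^2 ≤ |r j|^2 := by
                  apply sq_le_sq' (by linarith [abs_nonneg (r j), hj.2.2]) hj.2.2
              _ = (r j)^2 := sq_abs _
        _ ≤ ∑ j, (A.mulVec (fun k => v k) j)^2 := by
            apply Finset.sum_le_sum_of_subset_of_nonneg (Finset.subset_univ _)
            intro j _ _; positivity
    calc Q^2 * (m * (1 - q - β)) ≤ Q^2 * (U.card : ℝ) := by
          apply mul_le_mul_of_nonneg_left hcardU (by positivity)
      _ = (U.card : ℝ) * Q^2 := by ring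
      _ ≤ ∑ j, (A.mulVec (fun k => v k) j)^2 := hsum
      _ ≤ sigmaMax A ^ 2 * D ^ 2 := hAv
  -- pointwise bound on summands
  have hpt : ∀ i ∈ S, ‖(xk + r i • row A i) - xstar‖ ^ 2 ≤ 2*D^2 + 2*Q^2 := by
    intro i hi
    rw [hS, Finset.mem_filter] at hi
    have hrowi : ‖row A i‖ = 1 := by
      rw [EuclideanSpace.norm_eq]
      have : ∀ k, ‖row A i k‖^2 = (A i k)^2 := fun k => by
        rw [row]; simp [sq_abs]
      rw [show (∑ k, ‖row A i k‖^2) = 1 by rw [Finset.sum_congr rfl fun k _ => this k, hrow i]]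
      exact Real.sqrt_one
    have h1 : ‖(xk + r i • row A i) - xstar‖ ≤ D + |r i| := by
      have : (xk + r i • row A i) - xstar = (xk - xstar) + r i • row A i := by abel
      rw [this]
      calc ‖(xk - xstar) + r i • row A i‖ ≤ ‖xk - xstar‖ + ‖r i • row A i‖ := norm_add_le _ _
        _ = D + |r i| := by rw [norm_smul, hrowi, hD]; simp [Real.norm_eq_abs]
    have hri : |r i| ≤ Q := hi.2.2
    have hnn : 0 ≤ ‖(xk + r i • row A i) - xstar‖ := norm_nonneg _
    have h2 : ‖(xk + r i • row A i) - xstar‖^2 ≤ (D + |r i|)^2 := by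
      apply pow_le_pow_left₀ hnn h1
    nlinarith [abs_nonneg (r i), norm_nonneg (xk - xstar), sq_nonneg (D - |r i|)]
  -- combine
  have hScard : (0:ℝ) < (S.card : ℝ) := by
    exact_mod_cast Finset.card_pos.mpr hSne
  have hsumS : ∑ i ∈ S, ‖(xk + r i • row A i) - xstar‖ ^ 2 ≤ (S.card : ℝ) * (2*D^2 + 2*Q^2) := by
    calc ∑ i ∈ S, ‖(xk + r i • row A i) - xstar‖ ^ 2 ≤ ∑ i ∈ S, (2*D^2 + 2*Q^2) :=
          Finset.sum_le_sum hpt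
      _ = (S.card : ℝ) * (2*D^2 + 2*Q^2) := by rw [Finset.sum_const, nsmul_eq_mul]
  have hfin : 2*D^2 + 2*Q^2 ≤ 2 * (1 + sigmaMax A ^ 2 / (m * (1 - q - β))) * D ^ 2 := by
    have h2 : Q^2 ≤ sigmaMax A ^2 * D^2 / (m * (1 - q - β)) := by
      rw [le_div_iff₀ hc]; linarith
    have : 2 * (1 + sigmaMax A ^ 2 / (m * (1 - q - β))) * D ^ 2
        = 2*D^2 + 2 * (sigmaMax A ^2 * D^2 / (m * (1 - q - β))) := by ring
    rw [this]; linarith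
  calc (1 / (S.card : ℝ)) * ∑ i ∈ S, ‖(xk + r i • row A i) - xstar‖ ^ 2
      ≤ (1 / (S.card : ℝ)) * ((S.card : ℝ) * (2*D^2 + 2*Q^2)) := by
        apply mul_le_mul_of_nonneg_left hsumS (by positivity)
    _ = 2*D^2 + 2*Q^2 := by field_simp
    _ ≤ 2 * (1 + sigmaMax A ^ 2 / (m * (1 - q - β))) * D ^ 2 := hfin
end

section
/- Let β < q < 1 − β with qm and βm integers. Suppose A x* = b_t and b = b_t + ξ with ‖ξ‖₀ ≤ βm. For any x_k ∈ ℝⁿ, let B be a set of exactly qm indices such that |r_j| ≤ Q for every j ∈ B, and set S := B ∩ supp(ξ). Then B \ S is nonempty and (1/|B\S|) Σ_{i∈B\S} ‖(x_k + r_i a_i) − x*‖² ≤ (1 − σ_{q−β,min}(A)²/(qm))·‖x_k − x*‖². -/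
open Finset

lemma enorm_sq {n : ℕ} (v : EuclideanSpace ℝ (Fin n)) : ‖v‖ ^ 2 = ∑ k, (v k) ^ 2 := by
  rw [EuclideanSpace.norm_eq, Real.sq_sqrt (by positivity)]
  simp [sq_abs]

theorem qrk_noncorrupt_rows_bound
    {m n : ℕ} (A : Matrix (Fin m) (Fin n) ℝ)
    (q β : ℝ) (kq kβ : ℕ)
    (hm : 0 < m) (hmn : n ≤ m) (hrank : A.rank = n)
    (hrow : ∀ j, ∑ k, (A j k) ^ 2 = 1)
    (hβq : β < q) (hq1 : q < 1 - β)
    (hkq : (kq : ℝ) = q * m) (hkβ : (kβ : ℝ) = β * m)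
    (xstar : EuclideanSpace ℝ (Fin n)) (bt b ξ : Fin m → ℝ)
    (hsol : A.mulVec (fun k => xstar k) = bt)
    (hb : b = bt + ξ)
    (hsparse : (Finset.univ.filter fun j => ξ j ≠ 0).card ≤ kβ)
    (xk : EuclideanSpace ℝ (Fin n)) (Q : ℝ)
    (hQ : IsQuantile (fun j => |resid A b xk j|) kq Q)
    (B : Finset (Fin m)) (hBcard : B.card = kq)
    (hBQ : ∀ j ∈ B, |resid A b xk j| ≤ Q)
    (S : Finset (Fin m)) (hS : S = B.filter fun j => ξ j ≠ 0) :
    (B \ S).Nonempty ∧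
    (1 / (((B \ S).card : ℝ))) *
        ∑ i ∈ B \ S, ‖(xk + resid A b xk i • row A i) - xstar‖ ^ 2 ≤
      (1 - sigmaSMin A (kq - kβ) ^ 2 / (q * m)) * ‖xk - xstar‖ ^ 2 := by
  have hm' : (0:ℝ) < m := by exact_mod_cast hm
  have hkqβR : (kβ:ℝ) < (kq:ℝ) := by rw [hkq, hkβ]; nlinarith
  have hkqβ : kβ < kq := by exact_mod_cast hkqβR
  have hqm0 : (0:ℝ) < q * m := by
    have : (0:ℝ) ≤ (kβ:ℝ) := Nat.cast_nonneg _
    nlinarith [hkq]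
  have hSB : S ⊆ B := by rw [hS]; exact filter_subset _ _
  have hScard : S.card ≤ kβ := by
    refine le_trans (card_le_card ?_) hsparse
    rw [hS]; intro x hx; simp only [mem_filter] at *; exact ⟨mem_univ x, hx.2⟩
  have hBScard : kq - kβ ≤ (B \ S).card := by
    rw [card_sdiff_of_subset hSB, hBcard]; omega
  have hne : (B \ S).Nonempty := by
    rw [← card_pos]; omega
  refine ⟨hne, ?_⟩
  set e : EuclideanSpace ℝ (Fin n) := xk - xstar with he
  -- residual fact on non-corrupted rows
  have hr : ∀ i ∈ B \ S, resid A b xk i = ∑ k, A i k * (xstar k - xk k) := by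
    intro i hi
    obtain ⟨hiB, hiS⟩ := mem_sdiff.mp hi
    have hξ : ξ i = 0 := by
      by_contra h; exact hiS (hS ▸ mem_filter.mpr ⟨hiB, h⟩)
    have hbi : b i = bt i := by simp [hb, hξ]
    have hbt : bt i = ∑ k, A i k * xstar k := by
      rw [← hsol]; simp [Matrix.mulVec, dotProduct]
    rw [resid, hbi, hbt, ← Finset.sum_sub_distrib]
    exact Finset.sum_congr rfl fun k _ => by ring
  -- pointwise identity
  have hterm : ∀ i ∈ B \ S, ‖(xk + resid A b xk i • row A i) - xstar‖ ^ 2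
      = ‖e‖ ^ 2 - (resid A b xk i) ^ 2 := by
    intro i hi
    have hri := hr i hi
    set r := resid A b xk i with hrdef
    rw [enorm_sq, enorm_sq]
    have happ : ∀ k, ((xk + r • row A i) - xstar) k = (e k) + r * A i k := by
      intro k; simp [he, row]; ring
    have h2 : (∑ k, e k * A i k) + r = 0 := by
      rw [hri, ← Finset.sum_add_distrib]
      apply Finset.sum_eq_zero; intro k _
      simp [he]; ring
    calc ∑ k, (((xk + r • row A i) - xstar) k) ^ 2
        = ∑ k, ((e k) ^ 2 + 2 * r * (e k * A i k) + r ^ 2 * (A i k) ^ 2) := by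
          refine Finset.sum_congr rfl fun k _ => by rw [happ k]; ring
      _ = (∑ k, (e k) ^ 2) + 2 * r * (∑ k, e k * A i k) + r ^ 2 * (∑ k, (A i k) ^ 2) := by
          rw [Finset.sum_add_distrib, Finset.sum_add_distrib, ← Finset.mul_sum, ← Finset.mul_sum]
      _ = (∑ k, (e k) ^ 2) - r ^ 2 := by
          rw [hrow i]
          have : (∑ k, e k * A i k) = -r := by linarith
          rw [this]; ring
  have hsum : ∑ i ∈ B \ S, ‖(xk + resid A b xk i • row A i) - xstar‖ ^ 2
      = ((B \ S).card : ℝ) * ‖e‖ ^ 2 - ∑ i ∈ B \ S, (resid A b xk i) ^ 2 := by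
    rw [Finset.sum_congr rfl hterm, Finset.sum_sub_distrib, Finset.sum_const, nsmul_eq_mul]
  -- choose subset I of the right size
  obtain ⟨I, hIsub, hIcard⟩ := Finset.exists_subset_card_eq hBScard
  set σ := sigmaSMin A (kq - kβ) with hσdef
  -- nonnegativity facts about the sInf structure
  have innerNonneg : ∀ J : Finset (Fin m),
      (0:ℝ) ≤ sInf {u : ℝ | ∃ x : EuclideanSpace ℝ (Fin n), ‖x‖ = 1 ∧
        u = Real.sqrt (∑ i ∈ J, (A.mulVec (fun k => x k) i) ^ 2)} := by
    intro J
    apply Real.sInf_nonneg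
    rintro u ⟨x, hx, rfl⟩
    exact Real.sqrt_nonneg _
  have hσ0 : 0 ≤ σ := by
    rw [hσdef, sigmaSMin]
    apply Real.sInf_nonneg
    rintro t ⟨J, hJ, rfl⟩
    exact innerNonneg J
  have hσleI : σ ≤ sInf {u : ℝ | ∃ x : EuclideanSpace ℝ (Fin n), ‖x‖ = 1 ∧
      u = Real.sqrt (∑ i ∈ I, (A.mulVec (fun k => x k) i) ^ 2)} := by
    rw [hσdef, sigmaSMin]
    apply csInf_le
    · exact ⟨0, by rintro t ⟨J, hJ, rfl⟩; exact innerNonneg J⟩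
    · exact ⟨I, hIcard, rfl⟩
  -- key bound: σ^2 * ‖e‖^2 ≤ ∑_{i∈I} r_i^2
  have hkey : σ ^ 2 * ‖e‖ ^ 2 ≤ ∑ i ∈ I, (resid A b xk i) ^ 2 := by
    rcases eq_or_ne (‖e‖) 0 with h0 | h0
    · rw [h0]
      simp only [ne_eq, OfNat.ofNat_ne_zero, not_false_eq_true, zero_pow, mul_zero]
      positivity
    · have hepos : 0 < ‖e‖ := lt_of_le_of_ne (norm_nonneg _) (Ne.symm h0)
      set xh : EuclideanSpace ℝ (Fin n) := ‖e‖⁻¹ • ((xstar : EuclideanSpace ℝ (Fin n)) - xk) with hxh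
      have hxhnorm : ‖xh‖ = 1 := by
        rw [hxh, norm_smul]
        rw [show ‖(xstar : EuclideanSpace ℝ (Fin n)) - xk‖ = ‖e‖ from by rw [he, norm_sub_rev]]
        simp [Real.norm_eq_abs, abs_of_pos (inv_pos.mpr hepos), inv_mul_cancel₀ h0]
      have hAxh : ∀ i ∈ I, A.mulVec (fun k => xh k) i = ‖e‖⁻¹ * resid A b xk i := by
        intro i hi
        rw [hr i (hIsub hi)]
        simp only [Matrix.mulVec, dotProduct]
        rw [Finset.mul_sum]
        refine Finset.sum_congr rfl fun k _ => ?_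
        have : xh k = ‖e‖⁻¹ * (xstar k - xk k) := by simp [hxh]
        rw [this]; ring
      have hsq : ∑ i ∈ I, (A.mulVec (fun k => xh k) i) ^ 2
          = ‖e‖⁻¹ ^ 2 * ∑ i ∈ I, (resid A b xk i) ^ 2 := by
        rw [Finset.mul_sum]
        refine Finset.sum_congr rfl fun i hi => by rw [hAxh i hi]; ring
      have hle : σ ≤ Real.sqrt (∑ i ∈ I, (A.mulVec (fun k => xh k) i) ^ 2) := by
        refine le_trans hσleI (csInf_le ?_ ?_)
        · exact ⟨0, by rintro u ⟨x, hx, rfl⟩; exact Real.sqrt_nonneg _⟩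
        · exact ⟨xh, hxhnorm, rfl⟩
      have hσ2 : σ ^ 2 ≤ ∑ i ∈ I, (A.mulVec (fun k => xh k) i) ^ 2 := by
        have := pow_le_pow_left₀ hσ0 hle 2
        rwa [Real.sq_sqrt (by positivity)] at this
      rw [hsq] at hσ2
      have : σ ^ 2 * ‖e‖ ^ 2 ≤ (‖e‖⁻¹ ^ 2 * ∑ i ∈ I, (resid A b xk i) ^ 2) * ‖e‖ ^ 2 := by
        nlinarith [sq_nonneg (‖e‖)]
      calc σ ^ 2 * ‖e‖ ^ 2 ≤ (‖e‖⁻¹ ^ 2 * ∑ i ∈ I, (resid A b xk i) ^ 2) * ‖e‖ ^ 2 := this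
        _ = ∑ i ∈ I, (resid A b xk i) ^ 2 := by
            field_simp
  -- assemble
  have hRge : ∑ i ∈ I, (resid A b xk i) ^ 2 ≤ ∑ i ∈ B \ S, (resid A b xk i) ^ 2 :=
    Finset.sum_le_sum_of_subset_of_nonneg hIsub (fun i _ _ => sq_nonneg _)
  set R := ∑ i ∈ B \ S, (resid A b xk i) ^ 2 with hR
  have hR0 : 0 ≤ R := Finset.sum_nonneg fun i _ => sq_nonneg _
  set c : ℝ := ((B \ S).card : ℝ) with hc
  have hc0 : (0:ℝ) < c := by
    rw [hc]; exact_mod_cast card_pos.mpr hne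
  have hcqm : c ≤ q * m := by
    rw [hc, ← hkq]
    exact_mod_cast le_trans (card_le_card (sdiff_subset)) (le_of_eq hBcard)
  have hdiv : σ ^ 2 * ‖e‖ ^ 2 / (q * m) ≤ R / c :=
    div_le_div₀ hR0 (le_trans hkey hRge) hc0 hcqm
  rw [hsum]
  have h1 : (1 / c) * (c * ‖e‖ ^ 2 - R) = ‖e‖ ^ 2 - R / c := by
    field_simp
  have h2 : (1 - σ ^ 2 / (q * m)) * ‖e‖ ^ 2 = ‖e‖ ^ 2 - σ ^ 2 * ‖e‖ ^ 2 / (q * m) := by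
    ring
  rw [h1, h2]
  linarith
end

section
/- (Alternative one-step qRK contraction.) Let β < q < 1 − β with qm and βm integers. Suppose A x* = b_t and b = b_t + ξ with ‖ξ‖₀ ≤ βm. For any x_k ∈ ℝⁿ, let B be a set of exactly qm indices with |r_j| ≤ Q for all j ∈ B, containing every index j with |r_j| < Q. Then (1/(qm)) Σ_{i∈B} ‖(x_k + r_i a_i) − x*‖² ≤ (1 − C)·‖x_k − x*‖², where C := (q − β)·σ_{q−β,min}(A)²/(q² m) − (β/q)·(1 + 2σ_max(A)²/(m(1 − q − β))). Moreover, if (q/(q−β))·(βm/σ_max(A)² + 2β/(1 − q − β)) < σ_{q−β,min}(A)²/σ_max(A)², then C > 0. -/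
open Finset RealInnerProductSpace

lemma norm_sq_eucl {n : ℕ} (x : EuclideanSpace ℝ (Fin n)) : ‖x‖^2 = ∑ k, (x k)^2 := by
  rw [EuclideanSpace.norm_eq, Real.sq_sqrt (by positivity)]
  simp [sq_abs]

lemma expand_sq {n : ℕ} (x y : EuclideanSpace ℝ (Fin n)) (r : ℝ) :
    ‖x + r • y‖^2 = ‖x‖^2 + 2*r*⟪x,y⟫ + r^2*‖y‖^2 := by
  rw [norm_add_sq_real, real_inner_smul_right, norm_smul, Real.norm_eq_abs]
  ring_nf
  rw [sq_abs]

lemma aux_sq (r gg Qv : ℝ) (h : r^2 ≤ Qv^2) : (r+gg)^2 ≤ 2*Qv^2 + 2*gg^2 := by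
  nlinarith [sq_nonneg (r-gg)]

set_option maxHeartbeats 2000000 in
theorem qrk_one_step_contraction
    {m n : ℕ} (A : Matrix (Fin m) (Fin n) ℝ)
    (q β : ℝ) (kq kβ : ℕ)
    (hm : 0 < m) (hmn : n ≤ m) (hrank : A.rank = n)
    (hrow : ∀ j, ∑ k, (A j k) ^ 2 = 1)
    (hβq : β < q) (hq1 : q < 1 - β)
    (hkq : (kq : ℝ) = q * m) (hkβ : (kβ : ℝ) = β * m)
    (xstar : EuclideanSpace ℝ (Fin n)) (bt b ξ : Fin m → ℝ)
    (hsol : A.mulVec (fun k => xstar k) = bt)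
    (hb : b = bt + ξ)
    (hsparse : (Finset.univ.filter fun j => ξ j ≠ 0).card ≤ kβ)
    (xk : EuclideanSpace ℝ (Fin n)) (Q : ℝ)
    (hQ : IsQuantile (fun j => |resid A b xk j|) kq Q)
    (B : Finset (Fin m)) (hBcard : B.card = kq)
    (hBQ : ∀ j ∈ B, |resid A b xk j| ≤ Q)
    (hBfull : ∀ j, |resid A b xk j| < Q → j ∈ B)
    (C : ℝ)
    (hC : C = (q - β) * sigmaSMin A (kq - kβ) ^ 2 / (q ^ 2 * m) -
      (β / q) * (1 + 2 * sigmaMax A ^ 2 / (m * (1 - q - β)))) :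
    (1 / (q * m)) * ∑ i ∈ B, ‖(xk + resid A b xk i • row A i) - xstar‖ ^ 2 ≤
        (1 - C) * ‖xk - xstar‖ ^ 2 ∧
    ((q / (q - β)) * (β * m / sigmaMax A ^ 2 + 2 * β / (1 - q - β)) <
        sigmaSMin A (kq - kβ) ^ 2 / sigmaMax A ^ 2 → 0 < C) := by
  classical
  have hm' : (0:ℝ) < m := by exact_mod_cast hm
  have hβ0 : 0 ≤ β := by nlinarith [(Nat.cast_nonneg kβ : (0:ℝ) ≤ kβ), hkβ]
  have hq0 : 0 < q := lt_of_le_of_lt hβ0 hβq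
  have hD : 0 < 1 - q - β := by linarith
  have hkβq : kβ < kq := by
    have : (kβ:ℝ) < kq := by rw [hkβ, hkq]; nlinarith
    exact_mod_cast this
  set e : EuclideanSpace ℝ (Fin n) := xk - xstar with he
  set E : ℝ := ‖e‖^2 with hE
  have hE0 : 0 ≤ E := sq_nonneg _
  set g : Fin m → ℝ := fun j => ∑ k, A j k * e k with hg
  set M : ℝ := sigmaMax A with hM
  set σ : ℝ := sigmaSMin A (kq - kβ) with hσ
  -- row norms
  have hrownorm : ∀ j, ‖row A j‖ = 1 := by
    intro j
    rw [EuclideanSpace.norm_eq]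
    simp only [row, Real.norm_eq_abs] at *
    rw [show ∑ k, |A j k|^2 = ∑ k, (A j k)^2 by simp [sq_abs], hrow j, Real.sqrt_one]
  -- inner product with rows
  have hginner : ∀ j, ⟪e, row A j⟫ = g j := by
    intro j
    simp [PiLp.inner_apply, RCLike.inner_apply, row, g, mul_comm]
  -- residual identity
  have hres : ∀ j, resid A b xk j = ξ j - g j := by
    intro j
    have hbt : bt j = ∑ k, A j k * xstar k := by
      rw [← hsol]; simp [Matrix.mulVec, dotProduct]
    simp only [resid, hb, Pi.add_apply, hbt, g, he, PiLp.sub_apply]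
    have h2 : ∀ x, xk x * A j x = A j x * xk x := fun x => mul_comm _ _
    simp only [mul_sub, Finset.sum_sub_distrib, h2]
    ring
  -- g bound
  have hgE : ∀ j, (g j)^2 ≤ E := by
    intro j
    have h1 := abs_real_inner_le_norm e (row A j)
    rw [hginner j, hrownorm j, mul_one] at h1
    calc (g j)^2 = |g j|^2 := (sq_abs _).symm
    _ ≤ ‖e‖^2 := by gcongr
  -- pointwise identity
  have hpoint : ∀ i, ‖(xk + resid A b xk i • row A i) - xstar‖ ^ 2
      = E - (g i)^2 + (ξ i)^2 := by
    intro i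
    have hvec : (xk + resid A b xk i • row A i) - xstar = e + resid A b xk i • row A i := by
      rw [he]; abel
    rw [hvec, expand_sq, hginner, hrownorm, hres i]
    ring
  -- Q ≥ 0
  have hQ0 : 0 ≤ Q := by
    obtain ⟨hQ1, hQ2⟩ := hQ
    simp only at hQ1 hQ2
    have hne : (Finset.univ.filter fun j => |resid A b xk j| ≤ Q).Nonempty := by
      rw [← Finset.card_pos]; omega
    obtain ⟨j, hj⟩ := hne
    simp only [Finset.mem_filter] at hj
    exact le_trans (abs_nonneg _) hj.2
  -- image under A
  have hAe : ∀ j, (Matrix.toEuclideanLin A e) j = g j := by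
    intro j
    rfl
  have hAnorm : ∑ j, (g j)^2 ≤ M^2 * E := by
    have h1 : ‖Matrix.toEuclideanLin A e‖ ≤ M * ‖e‖ := by
      have h := (LinearMap.toContinuousLinearMap (Matrix.toEuclideanLin A)).le_opNorm e
      simpa [sigmaMax, hM] using h
    have h2 : ‖Matrix.toEuclideanLin A e‖^2 ≤ (M * ‖e‖)^2 :=
      pow_le_pow_left₀ (norm_nonneg _) h1 2
    rw [norm_sq_eucl] at h2
    simp_rw [hAe] at h2
    calc ∑ j, (g j)^2 ≤ (M*‖e‖)^2 := h2
    _ = M^2 * E := by rw [hE]; ring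
  -- quantile bound : Q^2 * (m * (1-q-β)) ≤ M^2 * E
  have hQbound : Q^2 * (m * (1-q-β)) ≤ M^2 * E := by
    classical
    set U : Finset (Fin m) := (Finset.univ.filter fun j => ξ j = 0) \ (Finset.univ.filter fun j => |resid A b xk j| < Q) with hU
    have hUnat : m + 1 ≤ U.card + kβ + kq := by
      have hc1 : (Finset.univ.filter fun j => ξ j = 0).card
          + (Finset.univ.filter fun j => ¬ (ξ j = 0)).card = m := by
        rw [Finset.card_filter_add_card_filter_not]
        simp
      have hc1' : (Finset.univ.filter fun j => ¬ (ξ j = 0)).card ≤ kβ := hsparse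
      have hc2 : (Finset.univ.filter fun j => |resid A b xk j| < Q).card < kq := by
        have := hQ.2
        simpa using this
      have hc3 : (Finset.univ.filter fun j => ξ j = 0).card ≤
          U.card + (Finset.univ.filter fun j => |resid A b xk j| < Q).card := by
        rw [hU]
        exact Finset.card_le_card_sdiff_add_card
      omega
    have hUreal : (m:ℝ) * (1 - q - β) ≤ U.card := by
      have : ((m:ℕ):ℝ) + 1 ≤ ((U.card + kβ + kq : ℕ):ℝ) := by exact_mod_cast hUnat
      push_cast at this
      nlinarith [this, hkq, hkβ]
    have hUg : ∀ j ∈ U, Q^2 ≤ (g j)^2 := by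
      intro j hj
      rw [hU, Finset.mem_sdiff, Finset.mem_filter, Finset.mem_filter] at hj
      obtain ⟨⟨-, hξ0⟩, hnotlt⟩ := hj
      have hge : Q ≤ |resid A b xk j| := by
        by_contra hcon
        exact hnotlt ⟨Finset.mem_univ j, by linarith [lt_of_not_ge hcon]⟩
      have h1 : Q^2 ≤ |resid A b xk j|^2 := pow_le_pow_left₀ hQ0 hge 2
      rw [sq_abs, hres j, hξ0] at h1
      calc Q^2 ≤ (0 - g j)^2 := h1
      _ = (g j)^2 := by ring
    have hsumU : (U.card:ℝ) * Q^2 ≤ ∑ j ∈ U, (g j)^2 := by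
      calc (U.card:ℝ) * Q^2 = ∑ _j ∈ U, Q^2 := by rw [Finset.sum_const, nsmul_eq_mul]
      _ ≤ ∑ j ∈ U, (g j)^2 := Finset.sum_le_sum hUg
    have hsub : ∑ j ∈ U, (g j)^2 ≤ ∑ j, (g j)^2 :=
      Finset.sum_le_sum_of_subset_of_nonneg (Finset.subset_univ U)
        (fun _ _ _ => sq_nonneg _)
    have hmul := mul_le_mul_of_nonneg_left hUreal (sq_nonneg Q)
    linarith [hsumU, hsub, hAnorm, hmul]
  -- corrupted set
  set S : Finset (Fin m) := B.filter (fun j => ξ j ≠ 0) with hS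
  have hSsub : S ⊆ B := Finset.filter_subset _ _
  have hScard : S.card ≤ kβ := by
    refine le_trans (Finset.card_le_card ?_) hsparse
    intro x hx
    simp only [hS, Finset.mem_filter] at hx ⊢
    exact ⟨Finset.mem_univ x, hx.2⟩
  -- good subset T
  have hTex : kq - kβ ≤ (B \ S).card := by
    rw [Finset.card_sdiff_of_subset hSsub, hBcard]
    omega
  obtain ⟨T, hTsub, hTcard⟩ := Finset.exists_subset_card_eq hTex
  -- sigma bound
  have hinner_nonneg : ∀ (I : Finset (Fin m)),
      0 ≤ sInf {u : ℝ | ∃ x : EuclideanSpace ℝ (Fin n), ‖x‖ = 1 ∧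
        u = Real.sqrt (∑ i ∈ I, (A.mulVec (fun k => x k) i) ^ 2)} := by
    intro I
    apply Real.sInf_nonneg
    rintro u ⟨x, -, rfl⟩
    exact Real.sqrt_nonneg _
  have houter_bdd : ∀ u ∈ {t : ℝ | ∃ I : Finset (Fin m), I.card = kq - kβ ∧
      t = sInf {u : ℝ | ∃ x : EuclideanSpace ℝ (Fin n), ‖x‖ = 1 ∧
        u = Real.sqrt (∑ i ∈ I, (A.mulVec (fun k => x k) i) ^ 2)}}, 0 ≤ u := by
    rintro u ⟨I, -, rfl⟩
    exact hinner_nonneg I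
  have hσ0 : 0 ≤ σ := by
    rw [hσ, sigmaSMin]
    exact Real.sInf_nonneg houter_bdd
  have hTsum : σ^2 * E ≤ ∑ i ∈ T, (g i)^2 := by
    by_cases hez : e = 0
    · have hE0' : E = 0 := by rw [hE, hez]; simp
      rw [hE0', mul_zero]
      exact Finset.sum_nonneg fun i _ => sq_nonneg _
    · have hen : 0 < ‖e‖ := norm_pos_iff.mpr hez
      set x : EuclideanSpace ℝ (Fin n) := ‖e‖⁻¹ • e with hx
      have hxn : ‖x‖ = 1 := norm_smul_inv_norm hez
      have hmv : ∀ i, A.mulVec (fun k => x k) i = ‖e‖⁻¹ * g i := by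
        intro i
        simp only [Matrix.mulVec, dotProduct, hx, PiLp.smul_apply, smul_eq_mul, hg,
          Finset.mul_sum]
        exact Finset.sum_congr rfl fun k _ => by ring
      have hval : Real.sqrt (∑ i ∈ T, (A.mulVec (fun k => x k) i)^2)
          = ‖e‖⁻¹ * Real.sqrt (∑ i ∈ T, (g i)^2) := by
        simp_rw [hmv, mul_pow, ← Finset.mul_sum]
        rw [Real.sqrt_mul (by positivity), Real.sqrt_sq (by positivity)]
      have hle : σ ≤ ‖e‖⁻¹ * Real.sqrt (∑ i ∈ T, (g i)^2) := by
        have step1 : sInf {u : ℝ | ∃ x' : EuclideanSpace ℝ (Fin n), ‖x'‖ = 1 ∧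
            u = Real.sqrt (∑ i ∈ T, (A.mulVec (fun k => x' k) i) ^ 2)}
            ≤ ‖e‖⁻¹ * Real.sqrt (∑ i ∈ T, (g i)^2) := by
          rw [← hval]
          apply csInf_le
          · exact ⟨0, fun u hu => by
              obtain ⟨x', -, rfl⟩ := hu; exact Real.sqrt_nonneg _⟩
          · exact ⟨x, hxn, rfl⟩
        refine le_trans ?_ step1
        rw [hσ, sigmaSMin]
        exact csInf_le ⟨0, houter_bdd⟩ ⟨T, hTcard, rfl⟩
      have h2 : σ * ‖e‖ ≤ Real.sqrt (∑ i ∈ T, (g i)^2) := by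
        rw [← le_div_iff₀ hen]
        calc σ ≤ ‖e‖⁻¹ * Real.sqrt (∑ i ∈ T, (g i)^2) := hle
        _ = Real.sqrt (∑ i ∈ T, (g i)^2) / ‖e‖ := by rw [div_eq_inv_mul]
      have h3 : (σ * ‖e‖)^2 ≤ (Real.sqrt (∑ i ∈ T, (g i)^2))^2 :=
        pow_le_pow_left₀ (mul_nonneg hσ0 (norm_nonneg _)) h2 2
      rw [Real.sq_sqrt (Finset.sum_nonneg fun i _ => sq_nonneg _)] at h3
      calc σ^2 * E = (σ * ‖e‖)^2 := by rw [hE]; ring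
      _ ≤ _ := h3
  -- sum of ξ² over B
  have hξsum : ∑ i ∈ B, (ξ i)^2 = ∑ i ∈ S, (ξ i)^2 := by
    rw [hS]
    refine (Finset.sum_filter_of_ne ?_).symm
    intro x _ hx h0
    exact hx (by simp [h0])
  -- main sum bound
  have hsum1 : ∑ i ∈ B, ‖(xk + resid A b xk i • row A i) - xstar‖ ^ 2
      = (kq:ℝ)*E - ∑ i ∈ B, (g i)^2 + ∑ i ∈ S, (ξ i)^2 := by
    calc ∑ i ∈ B, ‖(xk + resid A b xk i • row A i) - xstar‖ ^ 2
        = ∑ i ∈ B, (E - (g i)^2 + (ξ i)^2) := Finset.sum_congr rfl fun i _ => hpoint i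
    _ = ∑ i ∈ B, E - ∑ i ∈ B, (g i)^2 + ∑ i ∈ B, (ξ i)^2 := by
        rw [Finset.sum_add_distrib, Finset.sum_sub_distrib]
    _ = (kq:ℝ)*E - ∑ i ∈ B, (g i)^2 + ∑ i ∈ S, (ξ i)^2 := by
        rw [Finset.sum_const, hBcard, nsmul_eq_mul, hξsum]
  have hξb : ∀ i ∈ S, (ξ i)^2 ≤ 2*Q^2 + 2*(g i)^2 := by
    intro i hi
    have hiB : i ∈ B := hSsub hi
    have hr2 : (resid A b xk i)^2 ≤ Q^2 := by
      rw [← sq_abs]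
      exact pow_le_pow_left₀ (abs_nonneg _) (hBQ i hiB) 2
    have hξi : ξ i = resid A b xk i + g i := by rw [hres i]; ring
    rw [hξi]
    exact aux_sq _ _ _ hr2
  have hb1 : ∑ i ∈ S, (ξ i)^2 ≤ 2*(S.card:ℝ)*Q^2 + 2*∑ i ∈ S, (g i)^2 := by
    calc ∑ i ∈ S, (ξ i)^2 ≤ ∑ i ∈ S, (2*Q^2 + 2*(g i)^2) := Finset.sum_le_sum hξb
    _ = 2*(S.card:ℝ)*Q^2 + 2*∑ i ∈ S, (g i)^2 := by
        rw [Finset.sum_add_distrib, Finset.sum_const, Finset.mul_sum, nsmul_eq_mul]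
        ring
  have hb2 : ∑ i ∈ T, (g i)^2 + ∑ i ∈ S, (g i)^2 ≤ ∑ i ∈ B, (g i)^2 := by
    rw [← Finset.sum_sdiff hSsub]
    exact add_le_add
      (Finset.sum_le_sum_of_subset_of_nonneg hTsub fun i _ _ => sq_nonneg _) le_rfl
  have hb3 : ∑ i ∈ S, (g i)^2 ≤ (kβ:ℝ)*E := by
    calc ∑ i ∈ S, (g i)^2 ≤ ∑ _i ∈ S, E := Finset.sum_le_sum fun i _ => hgE i
    _ = (S.card:ℝ)*E := by rw [Finset.sum_const, nsmul_eq_mul]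
    _ ≤ (kβ:ℝ)*E := by
        have h : (S.card:ℝ) ≤ (kβ:ℝ) := by exact_mod_cast hScard
        exact mul_le_mul_of_nonneg_right h hE0
  have hScast : (S.card:ℝ) ≤ (kβ:ℝ) := by exact_mod_cast hScard
  have hmain : ∑ i ∈ B, ‖(xk + resid A b xk i • row A i) - xstar‖ ^ 2
      ≤ (kq:ℝ)*E - σ^2*E + 2*(kβ:ℝ)*Q^2 + (kβ:ℝ)*E := by
    have hQ2 : 2*(S.card:ℝ)*Q^2 ≤ 2*(kβ:ℝ)*Q^2 :=
      mul_le_mul_of_nonneg_right (by linarith [hScast]) (sq_nonneg Q)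
    linarith [hsum1, hb1, hb2, hb3, hTsum, hQ2, hsum1.le]
  constructor
  · show 1 / (q * ↑m) * ∑ i ∈ B, ‖(xk + resid A b xk i • row A i) - xstar‖ ^ 2 ≤ (1 - C) * E
    have hqm : (0:ℝ) < q * m := by positivity
    rw [one_div, inv_mul_le_iff₀ hqm]
    refine le_trans hmain ?_
    rw [hkq, hkβ]
    have hc1 : q*m*C = (q-β)*σ^2/q - β*m - 2*β*M^2/(1-q-β) := by
      rw [hC]
      field_simp
      ring
    have h2 : (q-β)*σ^2*E/q ≤ σ^2*E := by
      rw [div_le_iff₀ hq0]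
      nlinarith [mul_nonneg (mul_nonneg (sq_nonneg σ) hE0) hβ0]
    have h3 : 2*β*(m:ℝ)*Q^2 ≤ 2*β*M^2*E/(1-q-β) := by
      rw [le_div_iff₀ hD]
      nlinarith [mul_le_mul_of_nonneg_left hQbound (show (0:ℝ) ≤ 2*β by linarith)]
    have hrhs : q*m*((1-C)*E) = q*m*E - (q*m*C)*E := by ring
    rw [hrhs, hc1]
    have hdist : ((q-β)*σ^2/q - β*(m:ℝ) - 2*β*M^2/(1-q-β))*E
        = (q-β)*σ^2*E/q - β*(m:ℝ)*E - 2*β*M^2*E/(1-q-β) := by ring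
    linarith [h2, h3, hdist]
  · intro hhyp
    -- M ≥ 1
    have hM1 : (1:ℝ) ≤ M := by
      set j0 : Fin m := ⟨0, hm⟩
      set v : EuclideanSpace ℝ (Fin m) := Matrix.toEuclideanLin A (row A j0) with hv
      have happ : v j0 = 1 := by
        show A.mulVec (fun k => row A j0 k) j0 = 1
        simp only [Matrix.mulVec, dotProduct, row]
        calc ∑ k, A j0 k * A j0 k = ∑ k, (A j0 k)^2 :=
          Finset.sum_congr rfl fun k _ => (sq (A j0 k)).symm
        _ = 1 := hrow j0
      have hcoord : |v j0| ≤ ‖v‖ := by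
        rw [EuclideanSpace.norm_eq]
        have h1 : |v j0|^2 ≤ ∑ k, ‖v k‖^2 :=
          Finset.single_le_sum (f := fun k => ‖v k‖^2)
            (fun _ _ => sq_nonneg _) (Finset.mem_univ j0)
        calc |v j0| = Real.sqrt (|v j0|^2) := by
              rw [Real.sqrt_sq (abs_nonneg _)]
        _ ≤ Real.sqrt (∑ k, ‖v k‖^2) := Real.sqrt_le_sqrt h1
      have h2 : ‖v‖ ≤ M := by
        have h := (LinearMap.toContinuousLinearMap (Matrix.toEuclideanLin A)).le_opNorm
          (row A j0)
        rw [hrownorm j0, mul_one] at h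
        simpa [sigmaMax, hM, hv] using h
      rw [happ] at hcoord
      simpa using le_trans hcoord h2
    have hMpos : (0:ℝ) < M := lt_of_lt_of_le one_pos hM1
    have hM2 : (0:ℝ) < M^2 := by positivity
    have hqβ : (0:ℝ) < q - β := by linarith
    -- clear M² from hypothesis
    have key : q*(β*(m:ℝ) + 2*β*M^2/(1-q-β)) < (q-β)*σ^2 := by
      have h7 := mul_lt_mul_of_pos_right hhyp hM2
      rw [div_mul_cancel₀ _ (ne_of_gt hM2)] at h7
      have h8 := mul_lt_mul_of_pos_right h7 hqβ
      calc q*(β*(m:ℝ) + 2*β*M^2/(1-q-β))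
          = q/(q-β)*(β*(m:ℝ)/M^2 + 2*β/(1-q-β))*M^2*(q-β) := by
            field_simp
      _ < σ^2*(q-β) := h8
      _ = (q-β)*σ^2 := by ring
    rw [hC, sub_pos]
    have h5 : (q*(β*m + 2*β*M^2/(1-q-β)))/(q^2*m) < ((q-β)*σ^2)/(q^2*m) :=
      (div_lt_div_iff_of_pos_right (by positivity)).mpr key
    have h6 : (q*(β*m + 2*β*M^2/(1-q-β)))/(q^2*m)
        = β/q * (1 + 2*M^2/(m*(1-q-β))) := by
      field_simp
    calc β/q * (1 + 2*M^2/(m*(1-q-β))) = _ := h6.symm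
    _ < ((q-β)*σ^2)/(q^2*m) := h5
    _ = (q-β)*σ^2/(q^2*m) := by ring
end

section
/- Let 0 < β, β < q < 1 − β, with βm and qm integers, and set r := β/(1 − q − β) and p := (q − β)/q. If r < 4 and σ_max(A)² > βm·(1 − q − β)/(2√β·√(1 − q − β) − β), then α₁ < α₂, where α₁ := 1 − p·σ_{q−β,min}(A)²/(qm) + (1/q)·(β + 2σ_max(A)²·r/m) and α₂ := 1 − p·σ_{q−β,min}(A)²/(qm) + (σ_max(A)²/(qm))·(2√r + r). -/
open Finset

theorem qrk_decay_factor_comparison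
    {m n : ℕ} (A : Matrix (Fin m) (Fin n) ℝ)
    (q β : ℝ) (kq kβ : ℕ)
    (hm : 0 < m) (hmn : n ≤ m) (hrank : A.rank = n)
    (hrow : ∀ j, ∑ k, (A j k) ^ 2 = 1)
    (hβ0 : 0 < β) (hβq : β < q) (hq1 : q < 1 - β)
    (hkq : (kq : ℝ) = q * m) (hkβ : (kβ : ℝ) = β * m)
    (r p : ℝ) (hr : r = β / (1 - q - β)) (hp : p = (q - β) / q)
    (hr4 : r < 4)
    (hσ : sigmaMax A ^ 2 >
      β * m * (1 - q - β) / (2 * Real.sqrt β * Real.sqrt (1 - q - β) - β)) :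
    1 - p * sigmaSMin A (kq - kβ) ^ 2 / (q * m) +
        (1 / q) * (β + 2 * sigmaMax A ^ 2 * r / m) <
      1 - p * sigmaSMin A (kq - kβ) ^ 2 / (q * m) +
        (sigmaMax A ^ 2 / (q * m)) * (2 * Real.sqrt r + r) := by
  have hc : 0 < 1 - q - β := by linarith
  have hq0 : (0:ℝ) < q := lt_trans hβ0 hβq
  have hm0 : (0:ℝ) < m := by exact_mod_cast hm
  have hqm : (0:ℝ) < q * m := mul_pos hq0 hm0
  have hsb : Real.sqrt β * Real.sqrt β = β := Real.mul_self_sqrt hβ0.le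
  have hsc : Real.sqrt (1 - q - β) * Real.sqrt (1 - q - β) = 1 - q - β :=
    Real.mul_self_sqrt hc.le
  have hscpos : 0 < Real.sqrt (1 - q - β) := Real.sqrt_pos.mpr hc
  have hsbpos : 0 < Real.sqrt β := Real.sqrt_pos.mpr hβ0
  have hβ4c : β < 4 * (1 - q - β) := by
    rw [hr, div_lt_iff₀ hc] at hr4; linarith
  have hsblt : Real.sqrt β < 2 * Real.sqrt (1 - q - β) := by
    nlinarith
  have hd : 0 < 2 * Real.sqrt β * Real.sqrt (1 - q - β) - β := by
    nlinarith
  have k1 : β * m * (1 - q - β) <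
      sigmaMax A ^ 2 * (2 * Real.sqrt β * Real.sqrt (1 - q - β) - β) := by
    have := (div_lt_iff₀ hd).mp hσ; linarith
  have hr0 : 0 ≤ r := by rw [hr]; positivity
  have hrc : r * (1 - q - β) = β := by rw [hr]; field_simp
  have hsrc : Real.sqrt r * Real.sqrt (1 - q - β) = Real.sqrt β := by
    rw [← Real.sqrt_mul hr0, hrc]
  have hσ0 : 0 < sigmaMax A ^ 2 := by
    nlinarith [mul_pos (mul_pos hβ0 hm0) hc]
  apply add_lt_add_right
  have e1 : (1 / q) * (β + 2 * sigmaMax A ^ 2 * r / (m:ℝ))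
      = (β * m + 2 * sigmaMax A ^ 2 * r) / (q * m) := by
    field_simp
  have e2 : (sigmaMax A ^ 2 / (q * (m:ℝ))) * (2 * Real.sqrt r + r)
      = (sigmaMax A ^ 2 * (2 * Real.sqrt r + r)) / (q * m) := by ring
  rw [e1, e2, div_lt_div_iff₀ hqm hqm]
  have e3 : (2 * Real.sqrt r - r) * (1 - q - β)
      = 2 * Real.sqrt β * Real.sqrt (1 - q - β) - β := by
    linear_combination (-2 * Real.sqrt r) * hsc + 2 * Real.sqrt (1 - q - β) * hsrc - hrc
  have key : β * m < sigmaMax A ^ 2 * (2 * Real.sqrt r - r) := by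
    have h : β * m * (1 - q - β)
        < sigmaMax A ^ 2 * (2 * Real.sqrt r - r) * (1 - q - β) := by
      rw [mul_assoc (sigmaMax A ^ 2), e3]; linarith
    exact (mul_lt_mul_iff_of_pos_right hc).mp h
  have h2 := mul_lt_mul_of_pos_left key hqm
  linarith [h2]
end

section
/- Let 0 < q < 1 − β with qm and βm integers. Suppose A x* = b_t and b = b_t + η + ξ with ‖ξ‖₀ ≤ βm. Then for any x_k ∈ ℝⁿ, the q-quantile Q of the residual magnitudes satisfies Q ≤ σ_max(A)·‖x_k − x*‖/(√m·√(1 − q − β)) + √(1 − q)·‖η‖_∞/√(1 − q − β). -/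
open Finset

lemma mulVec_sq_sum_le {m n : ℕ} (A : Matrix (Fin m) (Fin n) ℝ)
    (y : EuclideanSpace ℝ (Fin n)) :
    Real.sqrt (∑ j, (A.mulVec (fun k => y k) j)^2) ≤
      ‖LinearMap.toContinuousLinearMap (Matrix.toEuclideanLin A)‖ * ‖y‖ := by
  have h1 : ‖(LinearMap.toContinuousLinearMap (Matrix.toEuclideanLin A)) y‖ ≤
      ‖LinearMap.toContinuousLinearMap (Matrix.toEuclideanLin A)‖ * ‖y‖ :=
    ContinuousLinearMap.le_opNorm _ y
  have h2 : ‖(LinearMap.toContinuousLinearMap (Matrix.toEuclideanLin A)) y‖ =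
      Real.sqrt (∑ j, (A.mulVec (fun k => y k) j)^2) := by
    rw [EuclideanSpace.norm_eq]
    congr 1
    apply Finset.sum_congr rfl
    intro j _
    have : (LinearMap.toContinuousLinearMap (Matrix.toEuclideanLin A)) y j
        = A.mulVec (fun k => y k) j := by
      simp [Matrix.toEuclideanLin_apply]
    rw [this, Real.norm_eq_abs, sq_abs]
  linarith [h2 ▸ h1]

theorem qrk_eh_quantile_bound
    {m n : ℕ} (A : Matrix (Fin m) (Fin n) ℝ)
    (q β : ℝ) (kq kβ : ℕ)
    (hm : 0 < m) (hmn : n ≤ m) (hrank : A.rank = n)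
    (hrow : ∀ j, ∑ k, (A j k) ^ 2 = 1)
    (hq0 : 0 < q) (hq1 : q < 1 - β)
    (hkq : (kq : ℝ) = q * m) (hkβ : (kβ : ℝ) = β * m)
    (xstar : EuclideanSpace ℝ (Fin n)) (bt b η ξ : Fin m → ℝ)
    (hsol : A.mulVec (fun k => xstar k) = bt)
    (hb : b = bt + η + ξ)
    (hsparse : (Finset.univ.filter fun j => ξ j ≠ 0).card ≤ kβ)
    (xk : EuclideanSpace ℝ (Fin n)) (Q : ℝ)
    (hQ : IsQuantile (fun j => |resid A b xk j|) kq Q) :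
    Q ≤ sigmaMax A * ‖xk - xstar‖ / (Real.sqrt m * Real.sqrt (1 - q - β)) +
      Real.sqrt (1 - q) * ‖η‖ / Real.sqrt (1 - q - β) := by
  obtain ⟨hQ1, hQ2⟩ := hQ
  have hm' : (0:ℝ) < m := by exact_mod_cast hm
  have hβ0 : 0 ≤ β := by
    have h0 : (0:ℝ) ≤ (kβ:ℝ) := Nat.cast_nonneg kβ
    nlinarith
  have hγ : 0 < 1 - q - β := by linarith
  have hγq : 1 - q - β ≤ 1 - q := by linarith
  set σ := sigmaMax A with hσ
  have hσ0 : 0 ≤ σ := norm_nonneg _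
  set C := ‖η‖ with hC
  have hC0 : 0 ≤ C := norm_nonneg _
  have hηj : ∀ j, |η j| ≤ C := fun j => by
    simpa using norm_le_pi_norm η j
  set e := A.mulVec (fun k => xstar k - xk k) with he
  have hr : ∀ j, resid A b xk j = e j + η j + ξ j := by
    intro j
    have hc := congrFun hsol j
    simp [resid, hb, ← hc, he, Matrix.mulVec, dotProduct, mul_sub,
      Finset.sum_sub_distrib]
    simp [mul_comm]
    ring
  -- bound on ‖e‖
  have hE : Real.sqrt (∑ j, e j ^ 2) ≤ σ * ‖xk - xstar‖ := by
    have h := mulVec_sq_sum_le A (xstar - xk)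
    have hy : (fun k => (xstar - xk) k) = fun k => xstar k - xk k := rfl
    rw [hy, norm_sub_rev] at h
    exact h
  set E := σ * ‖xk - xstar‖ with hEdef
  have hE0 : 0 ≤ E := mul_nonneg hσ0 (norm_nonneg _)
  -- the good index set
  set T := univ.filter (fun j : Fin m => Q ≤ |resid A b xk j| ∧ ξ j = 0) with hT
  have hTcard : m ≤ T.card +
      (univ.filter fun j : Fin m => |resid A b xk j| < Q).card +
      (univ.filter fun j : Fin m => ξ j ≠ 0).card := by
    have hsub : (univ : Finset (Fin m)) ⊆ T ∪
        (univ.filter fun j : Fin m => |resid A b xk j| < Q) ∪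
        (univ.filter fun j : Fin m => ξ j ≠ 0) := by
      intro j _
      simp only [hT, mem_union, mem_filter, mem_univ, true_and]
      by_cases h1 : |resid A b xk j| < Q
      · tauto
      · by_cases h2 : ξ j = 0
        · exact Or.inl (Or.inl ⟨le_of_not_gt h1, h2⟩)
        · tauto
    calc m = (univ : Finset (Fin m)).card := (Finset.card_fin m).symm
      _ ≤ _ := Finset.card_le_card hsub
      _ ≤ _ := le_trans (Finset.card_union_le _ _)
          (by gcongr; exact Finset.card_union_le _ _)
  have hTreal : (m:ℝ) * (1 - q - β) < T.card := by
    have h1 : ((univ.filter fun j : Fin m => |resid A b xk j| < Q).card : ℝ) + 1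
        ≤ kq := by exact_mod_cast hQ2
    have h2 : ((univ.filter fun j : Fin m => ξ j ≠ 0).card : ℝ) ≤ kβ := by
      exact_mod_cast hsparse
    have h3 : (m:ℝ) ≤ T.card +
        (univ.filter fun j : Fin m => |resid A b xk j| < Q).card +
        (univ.filter fun j : Fin m => ξ j ≠ 0).card := by exact_mod_cast hTcard
    nlinarith
  have hTpos : (0:ℝ) < T.card := lt_of_le_of_lt (by positivity) hTreal
  have hsqT : Real.sqrt m * Real.sqrt (1 - q - β) ≤ Real.sqrt T.card := by
    rw [← Real.sqrt_mul hm'.le]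
    exact Real.sqrt_le_sqrt hTreal.le
  have hsqmγ : 0 < Real.sqrt m * Real.sqrt (1 - q - β) := by positivity
  have hsqγ : 0 < Real.sqrt (1 - q - β) := Real.sqrt_pos.mpr hγ
  -- the noise term bound : C ≤ √(1-q) C / √(1-q-β)
  have hCterm : C ≤ Real.sqrt (1 - q) * C / Real.sqrt (1 - q - β) := by
    rw [le_div_iff₀ hsqγ]
    have := Real.sqrt_le_sqrt hγq
    nlinarith
  by_cases hQC : Q ≤ C
  · have : (0:ℝ) ≤ E / (Real.sqrt m * Real.sqrt (1 - q - β)) := by positivity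
    calc Q ≤ C := hQC
      _ ≤ Real.sqrt (1 - q) * C / Real.sqrt (1 - q - β) := hCterm
      _ ≤ _ := by linarith
  · push_neg at hQC
    have hQC' : 0 < Q - C := by linarith
    have key : (Q - C)^2 * T.card ≤ ∑ j, e j ^ 2 := by
      calc (Q - C)^2 * T.card = ∑ _j ∈ T, (Q - C)^2 := by
            rw [Finset.sum_const, nsmul_eq_mul]; ring
        _ ≤ ∑ j ∈ T, e j ^ 2 := by
            apply Finset.sum_le_sum
            intro j hj
            obtain ⟨-, hQj, hξj⟩ := Finset.mem_filter.mp hj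
            rw [hr j, hξj, add_zero] at hQj
            have habs : |e j + η j| ≤ |e j| + C :=
              le_trans (abs_add_le _ _) (by linarith [hηj j])
            have h1 : Q - C ≤ |e j| := by linarith
            calc (Q - C)^2 ≤ |e j|^2 := pow_le_pow_left₀ hQC'.le h1 2
              _ = e j ^ 2 := sq_abs _
        _ ≤ ∑ j, e j ^ 2 := Finset.sum_le_sum_of_subset_of_nonneg
            (Finset.subset_univ T) (fun j _ _ => sq_nonneg _)
    have hsqrtstep : Q - C ≤ Real.sqrt (∑ j, e j ^ 2) / Real.sqrt T.card := by
      have h1 : (Q - C)^2 ≤ (∑ j, e j ^ 2) / T.card := by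
        rw [le_div_iff₀ hTpos]; exact key
      have h2 : Q - C = Real.sqrt ((Q - C)^2) := (Real.sqrt_sq hQC'.le).symm
      rw [h2]
      calc Real.sqrt ((Q - C)^2) ≤ Real.sqrt ((∑ j, e j ^ 2) / T.card) :=
            Real.sqrt_le_sqrt h1
        _ = Real.sqrt (∑ j, e j ^ 2) / Real.sqrt T.card :=
            Real.sqrt_div (by positivity) _
    have hfin1 : Real.sqrt (∑ j, e j ^ 2) / Real.sqrt T.card ≤
        E / (Real.sqrt m * Real.sqrt (1 - q - β)) := by
      calc Real.sqrt (∑ j, e j ^ 2) / Real.sqrt T.card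
          ≤ E / Real.sqrt T.card :=
            (div_le_div_iff_of_pos_right (Real.sqrt_pos.mpr hTpos)).mpr hE
        _ ≤ E / (Real.sqrt m * Real.sqrt (1 - q - β)) :=
            div_le_div_of_nonneg_left hE0 hsqmγ hsqT
    linarith
end

section
/- Let 0 < q < 1 − β with qm and βm integers. Suppose A x* = b_t and b = b_t + η + ξ with ‖ξ‖₀ ≤ βm and supp(η) ∩ supp(ξ) = ∅. For any x_k ∈ ℝⁿ, if S := {j ∈ supp(ξ) : |r_j| ≤ Q} is nonempty, then (1/|S|) Σ_{i∈S} ‖(x_k + r_i a_i) − x*‖² ≤ 2·(1 + σ_max(A)²/(m(1 − q − β)) + 2σ_max(A)/(√m·√(1 − q − β)))·‖x_k − x*‖² + 2(1 − q)·‖η‖_∞²/(1 − q − β). -/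
set_option maxHeartbeats 1000000

open Finset

theorem qrk_eh_corrupt_rows_bound
    {m n : ℕ} (A : Matrix (Fin m) (Fin n) ℝ)
    (q β : ℝ) (kq kβ : ℕ)
    (hm : 0 < m) (hmn : n ≤ m) (hrank : A.rank = n)
    (hrow : ∀ j, ∑ k, (A j k) ^ 2 = 1)
    (hq0 : 0 < q) (hq1 : q < 1 - β)
    (hkq : (kq : ℝ) = q * m) (hkβ : (kβ : ℝ) = β * m)
    (xstar : EuclideanSpace ℝ (Fin n)) (bt b η ξ : Fin m → ℝ)
    (hsol : A.mulVec (fun k => xstar k) = bt)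
    (hb : b = bt + η + ξ)
    (hsparse : (Finset.univ.filter fun j => ξ j ≠ 0).card ≤ kβ)
    (hdisj : ∀ j, η j = 0 ∨ ξ j = 0)
    (xk : EuclideanSpace ℝ (Fin n)) (Q : ℝ)
    (hQ : IsQuantile (fun j => |resid A b xk j|) kq Q)
    (S : Finset (Fin m))
    (hS : S = Finset.univ.filter fun j => ξ j ≠ 0 ∧ |resid A b xk j| ≤ Q)
    (hSne : S.Nonempty) :
    (1 / (S.card : ℝ)) * ∑ i ∈ S, ‖(xk + resid A b xk i • row A i) - xstar‖ ^ 2 ≤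
      2 * (1 + sigmaMax A ^ 2 / (m * (1 - q - β)) +
          2 * sigmaMax A / (Real.sqrt m * Real.sqrt (1 - q - β))) * ‖xk - xstar‖ ^ 2 +
        2 * (1 - q) * ‖η‖ ^ 2 / (1 - q - β) := by
  classical
  set σ := sigmaMax A with hσdef
  set E := ‖xk - xstar‖ with hEdef
  set H := ‖η‖ with hHdef
  have hσ0 : 0 ≤ σ := norm_nonneg _
  have hE0 : 0 ≤ E := norm_nonneg _
  have hH0 : 0 ≤ H := norm_nonneg _
  have hqβ : 0 < 1 - q - β := by linarith
  have hmR : (0:ℝ) < m := Nat.cast_pos.mpr hm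
  have hβ0 : 0 ≤ β := by
    have h' : (0:ℝ) ≤ (kβ : ℝ) := Nat.cast_nonneg _
    rw [hkβ] at h'
    nlinarith
  have hMpos : (0:ℝ) < (m:ℝ) * (1 - q - β) := by positivity
  set M : ℝ := (m:ℝ) * (1 - q - β) with hMdef
  set s : ℝ := Real.sqrt M with hsdef
  have hs0 : 0 < s := Real.sqrt_pos.mpr hMpos
  have hs2 : s ^ 2 = M := Real.sq_sqrt hMpos.le
  -- residual formula
  set g : Fin m → ℝ := fun j => ∑ k, (xk - xstar) k * A j k with hgdef
  have hresid : ∀ j, resid A b xk j = η j + ξ j - g j := by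
    intro j
    have hbt : bt j = ∑ k, xstar k * A j k := by
      rw [← hsol]
      simp [Matrix.mulVec, dotProduct, mul_comm]
    have hsub : g j = (∑ k, xk k * A j k) - ∑ k, xstar k * A j k := by
      rw [hgdef, ← Finset.sum_sub_distrib]
      refine Finset.sum_congr rfl fun k _ => ?_
      have : (xk - xstar) k = xk k - xstar k := rfl
      rw [this, sub_mul]
    simp only [resid, hb, Pi.add_apply, hbt, hsub]
    ring
  -- row norms are 1
  have hrownorm : ∀ j, ‖row A j‖ = 1 := by
    intro j
    rw [EuclideanSpace.norm_eq]
    have : ∑ k, ‖row A j k‖ ^ 2 = 1 := by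
      simpa [row, Real.norm_eq_abs, sq_abs] using hrow j
    rw [this, Real.sqrt_one]
  -- operator norm bound
  have hAe : ∑ j, (g j) ^ 2 ≤ σ ^ 2 * E ^ 2 := by
    set f := LinearMap.toContinuousLinearMap (Matrix.toEuclideanLin A) with hf
    have h1 : ‖f (xk - xstar)‖ ≤ σ * E := f.le_opNorm _
    have h2 : ‖f (xk - xstar)‖ ^ 2 = ∑ j, (g j) ^ 2 := by
      rw [EuclideanSpace.norm_eq, Real.sq_sqrt (by positivity)]
      refine Finset.sum_congr rfl fun j _ => ?_
      have happ : (f (xk - xstar)) j = A.mulVec (fun k => (xk - xstar) k) j := rfl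
      rw [happ, Real.norm_eq_abs, sq_abs]
      simp [Matrix.mulVec, dotProduct, hgdef, mul_comm]
    calc ∑ j, (g j) ^ 2 = ‖f (xk - xstar)‖ ^ 2 := h2.symm
      _ ≤ (σ * E) ^ 2 := pow_le_pow_left₀ (norm_nonneg _) h1 2
      _ = σ ^ 2 * E ^ 2 := by ring
  -- kq ≥ 1
  have hkq1 : 1 ≤ kq := by
    rcases Nat.eq_zero_or_pos kq with h | h
    · exfalso
      have h0 : (0:ℝ) = q * m := by rw [← hkq, h]; simp
      nlinarith
    · exact h
  -- Q ≥ 0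
  have hQ0 : 0 ≤ Q := by
    obtain ⟨j, hj⟩ := Finset.card_pos.mp (lt_of_lt_of_le hkq1 hQ.1)
    have := (Finset.mem_filter.mp hj).2
    exact le_trans (abs_nonneg _) this
  -- the set of uncorrupted rows with large residual
  set U : Finset (Fin m) :=
    Finset.univ.filter (fun j => ξ j = 0 ∧ Q ≤ |resid A b xk j|) with hUdef
  have hUcardN : m + 1 ≤ U.card + kβ + kq := by
    have hsubset : (Finset.univ.filter (fun j => ¬(ξ j = 0 ∧ Q ≤ |resid A b xk j|)))
        ⊆ (Finset.univ.filter fun j => ξ j ≠ 0) ∪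
          (Finset.univ.filter fun j => |resid A b xk j| < Q) := by
      intro j hj
      simp only [Finset.mem_filter, Finset.mem_univ, true_and, Finset.mem_union,
        not_and_or, not_le] at hj ⊢
      tauto
    have hcompl : (Finset.univ.filter (fun j => ¬(ξ j = 0 ∧ Q ≤ |resid A b xk j|))).card ≤
        kβ + (Finset.univ.filter fun j => |resid A b xk j| < Q).card := by
      calc _ ≤ ((Finset.univ.filter fun j => ξ j ≠ 0) ∪
            (Finset.univ.filter fun j => |resid A b xk j| < Q)).card :=
          Finset.card_le_card hsubset
        _ ≤ _ := le_trans (Finset.card_union_le _ _) (Nat.add_le_add_right hsparse _)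
    have hsplit : U.card +
        (Finset.univ.filter (fun j => ¬(ξ j = 0 ∧ Q ≤ |resid A b xk j|))).card = m := by
      rw [hUdef, Finset.card_filter_add_card_filter_not]
      simp
    have hlt : (Finset.univ.filter fun j => |resid A b xk j| < Q).card < kq := by
      simpa using hQ.2
    omega
  have hUcard : M < (U.card : ℝ) := by
    have : ((m:ℝ) + 1) ≤ (U.card : ℝ) + (kβ : ℝ) + (kq : ℝ) := by exact_mod_cast hUcardN
    rw [hkβ, hkq] at this
    rw [hMdef]; nlinarith
  -- the quantile bound
  have hQle : Q ≤ H + σ * E / s := by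
    rcases le_or_gt Q H with h | h
    · have : 0 ≤ σ * E / s := by positivity
      linarith
    · have ht : ∀ j ∈ U, (Q - H) ^ 2 ≤ (g j) ^ 2 := by
        intro j hj
        obtain ⟨hξ, hr⟩ := (Finset.mem_filter.mp hj).2
        have hr' : resid A b xk j = η j - g j := by rw [hresid j, hξ]; ring
        have habs : |resid A b xk j| ≤ |η j| + |g j| := by
          rw [hr', sub_eq_add_neg]
          calc |η j + -g j| ≤ |η j| + |-g j| := abs_add_le _ _
            _ = |η j| + |g j| := by rw [abs_neg]
        have hηj : |η j| ≤ H := by simpa using norm_le_pi_norm η j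
        have hQH : Q - H ≤ |g j| := by linarith
        calc (Q - H) ^ 2 ≤ |g j| ^ 2 := pow_le_pow_left₀ (by linarith) hQH 2
          _ = (g j) ^ 2 := sq_abs _
      have hsumU : (U.card : ℝ) * (Q - H) ^ 2 ≤ ∑ j, (g j) ^ 2 := by
        calc (U.card : ℝ) * (Q - H) ^ 2 = ∑ _j ∈ U, (Q - H) ^ 2 := by
              rw [Finset.sum_const, nsmul_eq_mul]
          _ ≤ ∑ j ∈ U, (g j) ^ 2 := Finset.sum_le_sum ht
          _ ≤ ∑ j, (g j) ^ 2 :=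
            Finset.sum_le_sum_of_subset_of_nonneg (Finset.subset_univ _)
              (fun j _ _ => sq_nonneg _)
      have hkey : (Q - H) ^ 2 ≤ (σ * E / s) ^ 2 := by
        have h6 : (σ * E / s) ^ 2 = σ ^ 2 * E ^ 2 / M := by
          rw [div_pow, hs2]; ring_nf
        rw [h6, le_div_iff₀ hMpos]
        have h7 : (Q - H) ^ 2 * M ≤ (Q - H) ^ 2 * (U.card : ℝ) :=
          mul_le_mul_of_nonneg_left hUcard.le (sq_nonneg _)
        nlinarith [hsumU, hAe]
      have := le_of_pow_le_pow_left₀ two_ne_zero (by positivity : (0:ℝ) ≤ σ * E / s) hkey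
      linarith
  -- per-term bound
  have hterm : ∀ i ∈ S, ‖(xk + resid A b xk i • row A i) - xstar‖ ^ 2 ≤ (E + Q) ^ 2 := by
    intro i hi
    rw [hS] at hi
    obtain ⟨hξ, hr⟩ := (Finset.mem_filter.mp hi).2
    have heq : (xk + resid A b xk i • row A i) - xstar
        = (xk - xstar) + resid A b xk i • row A i := by abel
    have hn : ‖(xk + resid A b xk i • row A i) - xstar‖ ≤ E + Q := by
      rw [heq]
      calc ‖(xk - xstar) + resid A b xk i • row A i‖
          ≤ ‖xk - xstar‖ + ‖resid A b xk i • row A i‖ := norm_add_le _ _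
        _ = E + |resid A b xk i| * ‖row A i‖ := by
            rw [norm_smul, Real.norm_eq_abs]
        _ ≤ E + Q := by rw [hrownorm i, mul_one]; linarith
    exact pow_le_pow_left₀ (norm_nonneg _) hn 2
  -- average bound
  have hScard : (0:ℝ) < S.card := by exact_mod_cast Finset.card_pos.mpr hSne
  have havg : (1 / (S.card : ℝ)) * ∑ i ∈ S, ‖(xk + resid A b xk i • row A i) - xstar‖ ^ 2
      ≤ (E + Q) ^ 2 := by
    have hsum : ∑ i ∈ S, ‖(xk + resid A b xk i • row A i) - xstar‖ ^ 2
        ≤ (S.card : ℝ) * (E + Q) ^ 2 := by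
      calc ∑ i ∈ S, ‖(xk + resid A b xk i • row A i) - xstar‖ ^ 2
          ≤ ∑ _i ∈ S, (E + Q) ^ 2 := Finset.sum_le_sum hterm
        _ = (S.card : ℝ) * (E + Q) ^ 2 := by rw [Finset.sum_const, nsmul_eq_mul]
    calc (1 / (S.card : ℝ)) * ∑ i ∈ S, ‖(xk + resid A b xk i • row A i) - xstar‖ ^ 2
        ≤ (1 / (S.card : ℝ)) * ((S.card : ℝ) * (E + Q) ^ 2) :=
          mul_le_mul_of_nonneg_left hsum (by positivity)
      _ = (E + Q) ^ 2 := by field_simp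
  -- final algebra
  have hsqrt : Real.sqrt m * Real.sqrt (1 - q - β) = s := by
    rw [hsdef, hMdef, Real.sqrt_mul hmR.le]
  rw [hsqrt]
  have hfin : (E + Q) ^ 2 ≤ 2 * (1 + σ ^ 2 / M + 2 * σ / s) * E ^ 2
      + 2 * (1 - q) * H ^ 2 / (1 - q - β) := by
    have h1 : E + Q ≤ (E + σ * E / s) + H := by linarith
    have h2 : (E + Q) ^ 2 ≤ ((E + σ * E / s) + H) ^ 2 :=
      pow_le_pow_left₀ (by positivity) h1 2
    have h3 : ((E + σ * E / s) + H) ^ 2 ≤ 2 * (E + σ * E / s) ^ 2 + 2 * H ^ 2 := by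
      nlinarith [sq_nonneg (E + σ * E / s - H)]
    have h4 : 2 * (E + σ * E / s) ^ 2 = 2 * (1 + σ ^ 2 / M + 2 * σ / s) * E ^ 2 := by
      rw [← hs2]; field_simp; ring
    have h5 : 2 * H ^ 2 ≤ 2 * (1 - q) * H ^ 2 / (1 - q - β) := by
      rw [le_div_iff₀ hqβ]
      nlinarith [mul_nonneg (sq_nonneg H) hβ0]
    linarith
  calc (1 / (S.card : ℝ)) * ∑ i ∈ S, ‖(xk + resid A b xk i • row A i) - xstar‖ ^ 2
      ≤ (E + Q) ^ 2 := havg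
    _ ≤ _ := by rw [hMdef] at hfin; exact hfin
end

section
/- (One-step bound for the modified qRK iteration.) Let β < q < 1 − β with qm and βm integers. Suppose A x* = b_t, η, ξ ∈ ℝ^m with supp(η) ∩ supp(ξ) = ∅ and ‖ξ‖₀ ≤ βm, and b = b_t + η + ξ. Assume (q/(q−β))·(βm/σ_max(A)² + 2β/(1 − q − β) + 4β√m/(σ_max(A)·√(1 − q − β))) < σ_{q−β,min}(A)²/σ_max(A)². For any x_k ∈ ℝⁿ, let B be a set of exactly qm indices with |r_j| ≤ Q for all j ∈ B, containing every j with |r_j| < Q, and for i ∈ B define x_{k+1}(i) := x_k + ((b_t + ξ)_i − ⟨x_k, a_i⟩)·a_i. Then (1/(qm)) Σ_{i∈B} ‖x_{k+1}(i) − x*‖² ≤ (1 − C)·‖x_k − x*‖² + (2β(1 − q)/(q(1 − q − β)))·‖η‖_∞², where C := (q − β)·σ_{q−β,min}(A)²/(q² m) − (β/q)·(1 + 2σ_max(A)²/(m(1 − q − β)) + 4σ_max(A)/(√m·√(1 − q − β))), and C > 0. -/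
open Finset

open RealInnerProductSpace

set_option maxHeartbeats 1000000

theorem qrk_modified_one_step_bound
    {m n : ℕ} (A : Matrix (Fin m) (Fin n) ℝ)
    (q β : ℝ) (kq kβ : ℕ)
    (hm : 0 < m) (hmn : n ≤ m) (hrank : A.rank = n)
    (hrow : ∀ j, ∑ k, (A j k) ^ 2 = 1)
    (hβq : β < q) (hq1 : q < 1 - β)
    (hkq : (kq : ℝ) = q * m) (hkβ : (kβ : ℝ) = β * m)
    (xstar : EuclideanSpace ℝ (Fin n)) (bt b η ξ : Fin m → ℝ)
    (hsol : A.mulVec (fun k => xstar k) = bt)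
    (hb : b = bt + η + ξ)
    (hsparse : (Finset.univ.filter fun j => ξ j ≠ 0).card ≤ kβ)
    (hdisj : ∀ j, η j = 0 ∨ ξ j = 0)
    (hcond : (q / (q - β)) * (β * m / sigmaMax A ^ 2 + 2 * β / (1 - q - β) +
        4 * β * Real.sqrt m / (sigmaMax A * Real.sqrt (1 - q - β))) <
      sigmaSMin A (kq - kβ) ^ 2 / sigmaMax A ^ 2)
    (xk : EuclideanSpace ℝ (Fin n)) (Q : ℝ)
    (hQ : IsQuantile (fun j => |resid A b xk j|) kq Q)
    (B : Finset (Fin m)) (hBcard : B.card = kq)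
    (hBQ : ∀ j ∈ B, |resid A b xk j| ≤ Q)
    (hBfull : ∀ j, |resid A b xk j| < Q → j ∈ B)
    (C : ℝ)
    (hC : C = (q - β) * sigmaSMin A (kq - kβ) ^ 2 / (q ^ 2 * m) -
      (β / q) * (1 + 2 * sigmaMax A ^ 2 / (m * (1 - q - β)) +
        4 * sigmaMax A / (Real.sqrt m * Real.sqrt (1 - q - β)))) :
    (1 / (q * m)) *
        ∑ i ∈ B, ‖(xk + resid A (bt + ξ) xk i • row A i) - xstar‖ ^ 2 ≤
      (1 - C) * ‖xk - xstar‖ ^ 2 +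
        (2 * β * (1 - q) / (q * (1 - q - β))) * ‖η‖ ^ 2 ∧
    0 < C := by
  classical
  set σ := sigmaMax A with hσdef
  set S := sigmaSMin A (kq - kβ) with hSdef
  set L := 1 - q - β with hLdef
  set sm := Real.sqrt (m : ℝ) with hsmdef
  set sl := Real.sqrt L with hsldef
  set e : EuclideanSpace ℝ (Fin n) := xk - xstar with hedef
  set t := ‖e‖ with htdef
  set a := ‖η‖ with hadef
  set d : Fin m → ℝ := fun j => ∑ k, e k * A j k with hddef
  -- basic numeric facts
  have hm' : (0:ℝ) < m := by exact_mod_cast hm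
  have hβ0 : 0 ≤ β := by
    have : (0:ℝ) ≤ (kβ : ℝ) := Nat.cast_nonneg kβ
    rw [hkβ] at this; nlinarith
  have hq0 : 0 < q := lt_of_le_of_lt hβ0 hβq
  have hL0 : 0 < L := by rw [hLdef]; linarith
  have hσ0 : 0 ≤ σ := norm_nonneg _
  have ht0 : 0 ≤ t := norm_nonneg _
  have ha0 : 0 ≤ a := norm_nonneg _
  have hsm0 : 0 < sm := Real.sqrt_pos.mpr hm'
  have hsl0 : 0 < sl := Real.sqrt_pos.mpr hL0
  have hsm2 : sm ^ 2 = m := Real.sq_sqrt hm'.le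
  have hsl2 : sl ^ 2 = L := Real.sq_sqrt hL0.le
  have hkq0 : 0 < (kq : ℝ) := by rw [hkq]; positivity
  have hkβq : kβ ≤ kq := by
    have : (kβ : ℝ) ≤ (kq : ℝ) := by rw [hkq, hkβ]; nlinarith
    exact_mod_cast this
  have hS0 : 0 ≤ S := by
    rw [hSdef, sigmaSMin]
    apply Real.sInf_nonneg
    rintro x ⟨I, hI, rfl⟩
    apply Real.sInf_nonneg
    rintro u ⟨y, hy, rfl⟩
    positivity

  -- residual identities
  have hbt : ∀ j, bt j = ∑ k, A j k * xstar k := by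
    intro j; rw [← hsol]; rfl
  have hd_eq : ∀ j, d j = (∑ k, xk k * A j k) - ∑ k, A j k * xstar k := by
    intro j
    rw [← Finset.sum_sub_distrib]
    apply Finset.sum_congr rfl
    intro k _
    have hek : e k = xk k - xstar k := rfl
    show e k * A j k = _
    rw [hek]; ring
  have hrb : ∀ j, resid A b xk j = η j + ξ j - d j := by
    intro j
    have h1 := hd_eq j
    have h2 := hbt j
    simp only [resid, hb, Pi.add_apply]
    linarith
  have hrc : ∀ i, resid A (bt + ξ) xk i = ξ i - d i := by
    intro i
    have h1 := hd_eq i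
    have h2 := hbt i
    simp only [resid, Pi.add_apply]
    linarith
  -- geometry
  have hrownorm : ∀ j, ‖row A j‖ = 1 := by
    intro j
    rw [EuclideanSpace.norm_eq]
    have : ∑ k, ‖row A j k‖ ^ 2 = 1 := by
      rw [← hrow j]
      apply Finset.sum_congr rfl
      intro k _
      rw [Real.norm_eq_abs, sq_abs]; rfl
    rw [this, Real.sqrt_one]
  have hinner : ∀ j, ⟪e, row A j⟫ = d j := by
    intro j
    rw [PiLp.inner_apply]
    apply Finset.sum_congr rfl
    intro k _
    simp [row, RCLike.inner_apply, mul_comm]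
  have hN : ∀ i ∈ B, ‖(xk + resid A (bt + ξ) xk i • row A i) - xstar‖ ^ 2
      = t ^ 2 - (d i) ^ 2 + (ξ i) ^ 2 := by
    intro i _
    have h1 : (xk + resid A (bt + ξ) xk i • row A i) - xstar
        = e + (ξ i - d i) • row A i := by
      rw [hrc i, hedef]; abel
    rw [h1, norm_add_sq_real, real_inner_smul_right, hinner i, norm_smul, hrownorm i]
    rw [Real.norm_eq_abs, mul_one, sq_abs, ← htdef]
    ring
  have hsumN : ∑ i ∈ B, ‖(xk + resid A (bt + ξ) xk i • row A i) - xstar‖ ^ 2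
      = (kq : ℝ) * t ^ 2 - ∑ i ∈ B, ((d i) ^ 2 - (ξ i) ^ 2) := by
    rw [Finset.sum_congr rfl hN, Finset.sum_sub_distrib]
    have : ∑ i ∈ B, (t ^ 2 - (d i) ^ 2 + (ξ i) ^ 2)
        = ∑ i ∈ B, t ^ 2 - ∑ i ∈ B, ((d i) ^ 2) + ∑ i ∈ B, (ξ i) ^ 2 := by
      rw [Finset.sum_add_distrib, Finset.sum_sub_distrib]
    rw [this, Finset.sum_const, hBcard, nsmul_eq_mul]
    ring
  have ht2 : ∑ k, (e k) ^ 2 = t ^ 2 := by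
    rw [htdef, EuclideanSpace.norm_eq, Real.sq_sqrt (by positivity)]
    apply Finset.sum_congr rfl
    intro k _
    rw [Real.norm_eq_abs, sq_abs]
  have hd2 : ∀ j, (d j) ^ 2 ≤ t ^ 2 := by
    intro j
    have h1 : (∑ k, e k * A j k) ^ 2 ≤ (∑ k, (e k) ^ 2) * (∑ k, (A j k) ^ 2) :=
      Finset.sum_mul_sq_le_sq_mul_sq Finset.univ _ _
    rw [ht2, hrow j, mul_one] at h1
    exact h1
  have habsd : ∀ j, |d j| ≤ t := by
    intro j
    have h1 : Real.sqrt ((d j) ^ 2) ≤ Real.sqrt (t ^ 2) := Real.sqrt_le_sqrt (hd2 j)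
    rwa [Real.sqrt_sq_eq_abs, Real.sqrt_sq ht0] at h1
  have hDtot : ∑ j, (d j) ^ 2 ≤ σ ^ 2 * t ^ 2 := by
    set T := LinearMap.toContinuousLinearMap (Matrix.toEuclideanLin A) with hT
    have h1 : ‖T e‖ ≤ σ * t := T.le_opNorm e
    have h2 : ‖T e‖ ^ 2 = ∑ j, (d j) ^ 2 := by
      rw [EuclideanSpace.norm_eq, Real.sq_sqrt (by positivity)]
      apply Finset.sum_congr rfl
      intro j _
      rw [Real.norm_eq_abs, sq_abs]
      have h3 : T e j = A.mulVec (fun k => e k) j := rfl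
      rw [h3]
      have h4 : A.mulVec (fun k => e k) j = d j := by
        simp only [Matrix.mulVec, dotProduct, hddef]
        apply Finset.sum_congr rfl
        intro k _; ring
      rw [h4]
    nlinarith [norm_nonneg (T e), mul_nonneg hσ0 ht0]
  have hQ0 : 0 ≤ Q := by
    have h1 := hQ.1
    have h2 : 0 < kq := by exact_mod_cast hkq0
    obtain ⟨j, hj⟩ := Finset.card_pos.mp (lt_of_lt_of_le h2 h1)
    have := (Finset.mem_filter.mp hj).2
    exact le_trans (abs_nonneg _) this

  have haj : ∀ j, |η j| ≤ a := by
    intro j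
    have h1 := norm_le_pi_norm η j
    rwa [Real.norm_eq_abs] at h1
  clear_value σ S L sm sl e t a d
  -- split B into uncorrupted and corrupted parts
  set G : Finset (Fin m) := B.filter (fun j => ξ j = 0) with hGdef
  set K : Finset (Fin m) := B.filter (fun j => ¬ ξ j = 0) with hKdef
  have hGK : ∑ i ∈ G, ((d i) ^ 2 - (ξ i) ^ 2) + ∑ i ∈ K, ((d i) ^ 2 - (ξ i) ^ 2)
      = ∑ i ∈ B, ((d i) ^ 2 - (ξ i) ^ 2) :=
    Finset.sum_filter_add_sum_filter_not B _ _
  have hKcard : K.card ≤ kβ := by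
    refine le_trans (Finset.card_le_card ?_) hsparse
    intro x hx
    exact Finset.mem_filter.mpr ⟨Finset.mem_univ x, (Finset.mem_filter.mp hx).2⟩
  have hGKcard : G.card + K.card = kq := by
    rw [hGdef, hKdef, Finset.card_filter_add_card_filter_not, hBcard]
  have hGcard : kq - kβ ≤ G.card := by omega
  obtain ⟨G', hG'sub, hG'card⟩ := Finset.exists_subset_card_eq hGcard
  -- singular value lower bound on G'
  have hSG' : S ^ 2 * t ^ 2 ≤ ∑ i ∈ G', (d i) ^ 2 := by
    have hsum0 : 0 ≤ ∑ i ∈ G', (d i) ^ 2 := Finset.sum_nonneg (fun i _ => sq_nonneg _)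
    rcases eq_or_lt_of_le ht0 with h0 | htpos
    · rw [← h0]; simpa using hsum0
    · set x : EuclideanSpace ℝ (Fin n) := (t⁻¹ : ℝ) • e with hxdef
      have hx1 : ‖x‖ = 1 := by
        rw [hxdef, norm_smul, ← htdef, Real.norm_eq_abs, abs_of_pos (inv_pos.mpr htpos)]
        field_simp
      have hmvx : ∀ i, A.mulVec (fun k => x k) i = t⁻¹ * d i := by
        intro i
        have hxk : ∀ k, x k = t⁻¹ * e k := fun k => rfl
        rw [hddef]
        simp only [Matrix.mulVec, dotProduct]
        rw [Finset.mul_sum]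
        apply Finset.sum_congr rfl
        intro k _
        show A i k * x k = t⁻¹ * (e k * A i k)
        rw [hxk k]; ring
      have hsq : ∑ i ∈ G', (A.mulVec (fun k => x k) i) ^ 2
          = t⁻¹ ^ 2 * ∑ i ∈ G', (d i) ^ 2 := by
        rw [Finset.mul_sum]
        exact Finset.sum_congr rfl (fun i _ => by rw [hmvx i]; ring)
      have hbd1 : BddBelow {u : ℝ | ∃ y : EuclideanSpace ℝ (Fin n), ‖y‖ = 1 ∧
          u = Real.sqrt (∑ i ∈ G', (A.mulVec (fun k => y k) i) ^ 2)} := by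
        refine ⟨0, ?_⟩; rintro u ⟨y, hy, rfl⟩; positivity
      have hbd2 : BddBelow {u : ℝ | ∃ I : Finset (Fin m), I.card = kq - kβ ∧
          u = sInf {v : ℝ | ∃ y : EuclideanSpace ℝ (Fin n), ‖y‖ = 1 ∧
            v = Real.sqrt (∑ i ∈ I, (A.mulVec (fun k => y k) i) ^ 2)}} := by
        refine ⟨0, ?_⟩; rintro u ⟨I, hI, rfl⟩
        apply Real.sInf_nonneg; rintro v ⟨y, hy, rfl⟩; positivity
      have h1 : S ≤ Real.sqrt (∑ i ∈ G', (A.mulVec (fun k => x k) i) ^ 2) := by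
        rw [hSdef, sigmaSMin]
        refine le_trans (csInf_le hbd2 ⟨G', hG'card, rfl⟩) (csInf_le hbd1 ⟨x, hx1, rfl⟩)
      have h2 : S ^ 2 ≤ ∑ i ∈ G', (A.mulVec (fun k => x k) i) ^ 2 := by
        have h3 := pow_le_pow_left₀ hS0 h1 2
        rwa [Real.sq_sqrt (by positivity)] at h3
      rw [hsq] at h2
      have h4 := mul_le_mul_of_nonneg_right h2 (sq_nonneg t)
      have ht2' : t ≠ 0 := ne_of_gt htpos
      calc S ^ 2 * t ^ 2 ≤ (t⁻¹ ^ 2 * ∑ i ∈ G', (d i) ^ 2) * t ^ 2 := h4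
        _ = ∑ i ∈ G', (d i) ^ 2 := by field_simp
  have hGsum : S ^ 2 * t ^ 2 ≤ ∑ i ∈ G, ((d i) ^ 2 - (ξ i) ^ 2) := by
    have h1 : ∑ i ∈ G, ((d i) ^ 2 - (ξ i) ^ 2) = ∑ i ∈ G, (d i) ^ 2 := by
      apply Finset.sum_congr rfl
      intro i hi
      have h2 := (Finset.mem_filter.mp hi).2
      rw [h2]; ring
    rw [h1]
    exact le_trans hSG' (Finset.sum_le_sum_of_subset_of_nonneg hG'sub
      (fun i _ _ => sq_nonneg _))
  -- corrupted part bound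
  have hKsum : -((kβ : ℝ) * (Q ^ 2 + 2 * Q * t)) ≤ ∑ i ∈ K, ((d i) ^ 2 - (ξ i) ^ 2) := by
    have h1 : ∀ i ∈ K, (ξ i) ^ 2 - (d i) ^ 2 ≤ Q ^ 2 + 2 * Q * t := by
      intro i hi
      obtain ⟨hiB, hξi⟩ := Finset.mem_filter.mp hi
      have hηi : η i = 0 := (hdisj i).resolve_right hξi
      have hr : |ξ i - d i| ≤ Q := by
        have h2 := hBQ i hiB
        rw [hrb i, hηi] at h2
        simpa using h2
      have h3 : (ξ i - d i) ^ 2 ≤ Q ^ 2 := by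
        have h4 := abs_le.mp hr
        exact sq_le_sq' h4.1 h4.2
      have h4 : (ξ i - d i) * (d i) ≤ Q * t :=
        calc (ξ i - d i) * d i ≤ |(ξ i - d i) * d i| := le_abs_self _
          _ = |ξ i - d i| * |d i| := abs_mul _ _
          _ ≤ Q * t := mul_le_mul hr (habsd i) (abs_nonneg _) hQ0
      linarith [h3, h4]
    have h5 : ∑ i ∈ K, ((ξ i) ^ 2 - (d i) ^ 2) ≤ (K.card : ℝ) * (Q ^ 2 + 2 * Q * t) :=
      calc ∑ i ∈ K, ((ξ i) ^ 2 - (d i) ^ 2) ≤ ∑ _i ∈ K, (Q ^ 2 + 2 * Q * t) :=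
            Finset.sum_le_sum h1
        _ = (K.card : ℝ) * (Q ^ 2 + 2 * Q * t) := by rw [Finset.sum_const, nsmul_eq_mul]
    have h6 : (K.card : ℝ) * (Q ^ 2 + 2 * Q * t) ≤ (kβ : ℝ) * (Q ^ 2 + 2 * Q * t) := by
      have h7 : (K.card : ℝ) ≤ (kβ : ℝ) := by exact_mod_cast hKcard
      have h8 : 0 ≤ Q ^ 2 + 2 * Q * t := by
        have := mul_nonneg hQ0 ht0
        have := sq_nonneg Q
        linarith
      exact mul_le_mul_of_nonneg_right h7 h8
    have h9 : ∑ i ∈ K, ((d i) ^ 2 - (ξ i) ^ 2)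
        = (∑ i ∈ K, (d i) ^ 2) - ∑ i ∈ K, (ξ i) ^ 2 := Finset.sum_sub_distrib _ _
    have h10 : ∑ i ∈ K, ((ξ i) ^ 2 - (d i) ^ 2)
        = (∑ i ∈ K, (ξ i) ^ 2) - ∑ i ∈ K, (d i) ^ 2 := Finset.sum_sub_distrib _ _
    linarith
  -- quantile bound
  have hQb : Q ≤ a + σ * t / (sl * sm) := by
    have hpos : 0 ≤ σ * t / (sl * sm) := by positivity
    rcases le_or_gt Q a with h | h
    · linarith
    · set U : Finset (Fin m) := Bᶜ.filter (fun j => ξ j = 0) with hUdef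
      have hUc : (m : ℝ) - kq - kβ ≤ (U.card : ℝ) := by
        have h1 : U.card + (Bᶜ.filter (fun j => ¬ ξ j = 0)).card = Bᶜ.card :=
          Finset.card_filter_add_card_filter_not (fun j => ξ j = 0)
        have h2 : (Bᶜ.filter (fun j => ¬ ξ j = 0)).card ≤ kβ := by
          refine le_trans (Finset.card_le_card ?_) hsparse
          intro x hx
          exact Finset.mem_filter.mpr ⟨Finset.mem_univ x, (Finset.mem_filter.mp hx).2⟩
        have h3 : Bᶜ.card = m - kq := by
          rw [Finset.card_compl, hBcard]; simp
        have h4 : kq ≤ m := by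
          have h5 : (kq : ℝ) ≤ (m : ℝ) := by
            rw [hkq]
            calc q * (m : ℝ) ≤ 1 * m := mul_le_mul_of_nonneg_right (by linarith) hm'.le
              _ = m := one_mul _
          exact_mod_cast h5
        have h5 : m - kq ≤ U.card + kβ := by omega
        have h6 : ((m - kq : ℕ) : ℝ) = (m : ℝ) - (kq : ℝ) := by
          rw [Nat.cast_sub h4]
        have h8 : ((m - kq : ℕ) : ℝ) ≤ ((U.card + kβ : ℕ) : ℝ) := by exact_mod_cast h5
        rw [h6] at h8
        push_cast at h8
        linarith
      have hQU : ∀ j ∈ U, Q - a ≤ |d j| := by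
        intro j hj
        obtain ⟨hjB, hξj⟩ := Finset.mem_filter.mp hj
        rw [Finset.mem_compl] at hjB
        have h1 : Q ≤ |resid A b xk j| := by
          by_contra hcon
          exact hjB (hBfull j (lt_of_not_ge hcon))
        rw [hrb j, hξj] at h1
        have h2 : |η j + 0 - d j| ≤ |η j| + |d j| := by
          have h3 : η j + 0 - d j = η j - d j := by ring
          rw [h3]
          exact abs_sub (η j) (d j)
        have h4 := haj j
        linarith
      have hsum1 : (U.card : ℝ) * (Q - a) ^ 2 ≤ ∑ j ∈ U, (d j) ^ 2 := by
        have h1 : ∀ j ∈ U, (Q - a) ^ 2 ≤ (d j) ^ 2 := by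
          intro j hj
          have h2 := hQU j hj
          have h3 : 0 ≤ Q - a := by linarith
          calc (Q - a) ^ 2 ≤ |d j| ^ 2 := pow_le_pow_left₀ h3 h2 2
            _ = (d j) ^ 2 := sq_abs _
        calc (U.card : ℝ) * (Q - a) ^ 2 = ∑ _j ∈ U, (Q - a) ^ 2 := by
              rw [Finset.sum_const, nsmul_eq_mul]
          _ ≤ ∑ j ∈ U, (d j) ^ 2 := Finset.sum_le_sum h1
      have hsum2 : ∑ j ∈ U, (d j) ^ 2 ≤ σ ^ 2 * t ^ 2 :=
        le_trans (Finset.sum_le_sum_of_subset_of_nonneg (Finset.subset_univ U)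
          (fun i _ _ => sq_nonneg _)) hDtot
      have hLm : L * (m : ℝ) ≤ (U.card : ℝ) := by
        have h1 : L * (m : ℝ) = (m : ℝ) - (kq : ℝ) - (kβ : ℝ) := by
          rw [hLdef, hkq, hkβ]; ring
        linarith
      have hq2 : L * (m : ℝ) * (Q - a) ^ 2 ≤ σ ^ 2 * t ^ 2 := by
        have h2 : L * (m : ℝ) * (Q - a) ^ 2 ≤ (U.card : ℝ) * (Q - a) ^ 2 :=
          mul_le_mul_of_nonneg_right hLm (sq_nonneg _)
        linarith [hsum1, hsum2]
      have h3 : (Q - a) * (sl * sm) ≤ σ * t := by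
        have h5 : (sl * sm) ^ 2 = L * (m : ℝ) := by rw [mul_pow, hsl2, hsm2]
        have h4 : ((Q - a) * (sl * sm)) ^ 2 ≤ (σ * t) ^ 2 := by
          rw [mul_pow, h5, mul_pow]
          calc (Q - a) ^ 2 * (L * (m : ℝ)) = L * (m : ℝ) * (Q - a) ^ 2 := by ring
            _ ≤ σ ^ 2 * t ^ 2 := hq2
        have h6 : 0 ≤ (Q - a) * (sl * sm) :=
          mul_nonneg (by linarith) (by positivity)
        have h7 := Real.sqrt_le_sqrt h4
        rwa [Real.sqrt_sq h6, Real.sqrt_sq (mul_nonneg hσ0 ht0)] at h7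
      have h8 : (0 : ℝ) < sl * sm := mul_pos hsl0 hsm0
      have h9 : Q - a ≤ σ * t / (sl * sm) := (le_div_iff₀ h8).mpr h3
      linarith
  -- assembly
  set g := σ * t / (sl * sm) with hgdef
  have hg0 : 0 ≤ g := by positivity
  have hKQbound : Q ^ 2 + 2 * Q * t ≤ (a + g) ^ 2 + 2 * (a + g) * t := by
    have h1 : Q ^ 2 ≤ (a + g) ^ 2 := pow_le_pow_left₀ hQ0 hQb 2
    have h2 : Q * t ≤ (a + g) * t := mul_le_mul_of_nonneg_right hQb ht0
    linarith
  have key1 : (kβ : ℝ) * (Q ^ 2 + 2 * Q * t) ≤ β * (m : ℝ) * ((a + g) ^ 2 + 2 * (a + g) * t) := by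
    rw [← hkβ]
    exact mul_le_mul_of_nonneg_left hKQbound (Nat.cast_nonneg kβ)
  have key2 : β * (m : ℝ) * ((a + g) ^ 2 + 2 * (a + g) * t)
      ≤ β * m * t ^ 2 + 2 * β * σ ^ 2 * t ^ 2 / L + 4 * β * sm * σ * t ^ 2 / sl
        + 2 * β * m * (1 - q) * a ^ 2 / L := by
    have hptwise : (a + g) ^ 2 + 2 * (a + g) * t
        ≤ t ^ 2 + 2 * g ^ 2 + 4 * g * t + (2 + 2 * β / L) * a ^ 2 := by
      have hba : 0 ≤ 2 * β / L * a ^ 2 := by positivity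
      have hsq := sq_nonneg (a - (g + t))
      linarith
    have h1 : β * (m : ℝ) * ((a + g) ^ 2 + 2 * (a + g) * t)
        ≤ β * m * (t ^ 2 + 2 * g ^ 2 + 4 * g * t + (2 + 2 * β / L) * a ^ 2) :=
      mul_le_mul_of_nonneg_left hptwise (by positivity)
    have h2 : β * (m : ℝ) * (t ^ 2 + 2 * g ^ 2 + 4 * g * t + (2 + 2 * β / L) * a ^ 2)
        = β * m * t ^ 2 + 2 * β * σ ^ 2 * t ^ 2 / L + 4 * β * sm * σ * t ^ 2 / sl
          + 2 * β * m * (1 - q) * a ^ 2 / L := by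
      have h1q : 1 - q = L + β := by rw [hLdef]; ring
      rw [hgdef, h1q, ← hsm2, ← hsl2]
      field_simp
    linarith
  have hSBlower : S ^ 2 * t ^ 2 - (β * m * t ^ 2 + 2 * β * σ ^ 2 * t ^ 2 / L
        + 4 * β * sm * σ * t ^ 2 / sl + 2 * β * m * (1 - q) * a ^ 2 / L)
      ≤ ∑ i ∈ B, ((d i) ^ 2 - (ξ i) ^ 2) := by
    rw [← hGK]
    linarith [hGsum, hKsum, key1, key2]
  have hq' : q ≠ 0 := ne_of_gt hq0
  have hqβ' : (0 : ℝ) < q - β := by linarith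
  have hqmC : q * (m : ℝ) * C
      = (q - β) / q * S ^ 2 - (β * m + 2 * β * σ ^ 2 / L + 4 * β * sm * σ / sl) := by
    rw [hC, ← hsm2, ← hsl2]
    field_simp
  constructor
  · rw [hsumN, one_div, inv_mul_le_iff₀ (by positivity : (0 : ℝ) < q * m)]
    have hexp : q * (m : ℝ) * ((1 - C) * t ^ 2 + 2 * β * (1 - q) / (q * L) * a ^ 2)
        = q * m * t ^ 2 - q * m * C * t ^ 2 + 2 * β * m * (1 - q) * a ^ 2 / L := by
      field_simp
    rw [hexp]
    have hkqt : (kq : ℝ) * t ^ 2 = q * (m : ℝ) * t ^ 2 := by rw [hkq]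
    have hqmCt : q * (m : ℝ) * C * t ^ 2 = (q - β) / q * S ^ 2 * t ^ 2
        - (β * m + 2 * β * σ ^ 2 / L + 4 * β * sm * σ / sl) * t ^ 2 := by
      calc q * (m : ℝ) * C * t ^ 2 = (q * m * C) * t ^ 2 := by ring
        _ = _ := by rw [hqmC]; ring
    have hfrac : (q - β) / q * S ^ 2 * t ^ 2 ≤ S ^ 2 * t ^ 2 := by
      have h1 : (q - β) / q * S ^ 2 * t ^ 2 = S ^ 2 * t ^ 2 - β / q * (S ^ 2 * t ^ 2) := by
        field_simp
      have h2 : 0 ≤ β / q * (S ^ 2 * t ^ 2) := by positivity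
      linarith
    have hX : (β * (m : ℝ) + 2 * β * σ ^ 2 / L + 4 * β * sm * σ / sl) * t ^ 2
        = β * m * t ^ 2 + 2 * β * σ ^ 2 * t ^ 2 / L + 4 * β * sm * σ * t ^ 2 / sl := by
      ring
    have h1 : q * (m : ℝ) * C * t ^ 2
        ≤ S ^ 2 * t ^ 2 - (β * m * t ^ 2 + 2 * β * σ ^ 2 * t ^ 2 / L
          + 4 * β * sm * σ * t ^ 2 / sl) := by
      rw [hqmCt, hX]
      linarith [hfrac]
    linarith [hSBlower, h1, hkqt]
  · have hσpos : 0 < σ := by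
      rcases eq_or_lt_of_le hσ0 with h0 | h
      · exfalso
        rw [← h0] at hcond
        simp at hcond
        have h1 : 0 ≤ q / (q - β) * (2 * β / L) := by positivity
        linarith [hcond, h1]
      · exact h
    have hpos2 : 0 < (q - β) * σ ^ 2 / (q ^ 2 * (m : ℝ)) :=
      div_pos (mul_pos hqβ' (pow_pos hσpos 2)) (by positivity)
    have hmul := (mul_lt_mul_iff_right₀ hpos2).mpr hcond
    have hid : C = (q - β) * σ ^ 2 / (q ^ 2 * (m : ℝ)) * (S ^ 2 / σ ^ 2)
        - (q - β) * σ ^ 2 / (q ^ 2 * (m : ℝ))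
          * (q / (q - β) * (β * (m : ℝ) / σ ^ 2 + 2 * β / L + 4 * β * sm / (σ * sl))) := by
      rw [hC, ← hsm2, ← hsl2]
      field_simp
    linarith [hmul]
end

section
/- (qRK error horizon, one-step form.) Let β < q < 1 − β with qm and βm integers. Suppose A x* = b_t, b = b_t + η + ξ with ‖ξ‖₀ ≤ βm and supp(η) ∩ supp(ξ) = ∅, and assume (q/(q−β))·(βm/σ_max(A)² + 2β/(1 − q − β) + 4β√m/(σ_max(A)·√(1 − q − β))) < σ_{q−β,min}(A)²/σ_max(A)². For any x_k ∈ ℝⁿ, let B be a set of exactly qm indices with |r_j| ≤ Q for all j ∈ B, containing every j with |r_j| < Q. Then one step of qRK with uniform selection over B satisfies (1/(qm)) Σ_{i∈B} ‖(x_k + r_i a_i) − x*‖² ≤ (1 − C)·‖x_k − x*‖² + (2β(1 − q)/(q(1 − q − β)) + 1)·‖η‖_∞², where C := (q − β)·σ_{q−β,min}(A)²/(q² m) − (β/q)·(1 + 2σ_max(A)²/(m(1 − q − β)) + 4σ_max(A)/(√m·√(1 − q − β))), and C > 0. -/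
open Finset

set_option maxHeartbeats 1000000 in
open RealInnerProductSpace in
theorem qrk_error_horizon_one_step
    {m n : ℕ} (A : Matrix (Fin m) (Fin n) ℝ)
    (q β : ℝ) (kq kβ : ℕ)
    (hm : 0 < m) (hmn : n ≤ m) (hrank : A.rank = n)
    (hrow : ∀ j, ∑ k, (A j k) ^ 2 = 1)
    (hβq : β < q) (hq1 : q < 1 - β)
    (hkq : (kq : ℝ) = q * m) (hkβ : (kβ : ℝ) = β * m)
    (xstar : EuclideanSpace ℝ (Fin n)) (bt b η ξ : Fin m → ℝ)
    (hsol : A.mulVec (fun k => xstar k) = bt)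
    (hb : b = bt + η + ξ)
    (hsparse : (Finset.univ.filter fun j => ξ j ≠ 0).card ≤ kβ)
    (hdisj : ∀ j, η j = 0 ∨ ξ j = 0)
    (hcond : (q / (q - β)) * (β * m / sigmaMax A ^ 2 + 2 * β / (1 - q - β) +
        4 * β * Real.sqrt m / (sigmaMax A * Real.sqrt (1 - q - β))) <
      sigmaSMin A (kq - kβ) ^ 2 / sigmaMax A ^ 2)
    (xk : EuclideanSpace ℝ (Fin n)) (Q : ℝ)
    (hQ : IsQuantile (fun j => |resid A b xk j|) kq Q)
    (B : Finset (Fin m)) (hBcard : B.card = kq)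
    (hBQ : ∀ j ∈ B, |resid A b xk j| ≤ Q)
    (hBfull : ∀ j, |resid A b xk j| < Q → j ∈ B)
    (C : ℝ)
    (hC : C = (q - β) * sigmaSMin A (kq - kβ) ^ 2 / (q ^ 2 * m) -
      (β / q) * (1 + 2 * sigmaMax A ^ 2 / (m * (1 - q - β)) +
        4 * sigmaMax A / (Real.sqrt m * Real.sqrt (1 - q - β)))) :
    (1 / (q * m)) * ∑ i ∈ B, ‖(xk + resid A b xk i • row A i) - xstar‖ ^ 2 ≤
      (1 - C) * ‖xk - xstar‖ ^ 2 +
        (2 * β * (1 - q) / (q * (1 - q - β)) + 1) * ‖η‖ ^ 2 ∧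
    0 < C := by
  classical
  -- ## basic numerics
  have hmR : (0:ℝ) < m := by exact_mod_cast hm
  have hβ0 : 0 ≤ β := by
    have h0 : (0:ℝ) ≤ β * m := by rw [← hkβ]; exact Nat.cast_nonneg _
    nlinarith
  have hq0 : 0 < q := lt_of_le_of_lt hβ0 hβq
  have hd2 : 0 < 1 - q - β := by linarith
  have hqβ : 0 < q - β := by linarith
  have hqm : 0 < q * (m:ℝ) := mul_pos hq0 hmR
  have hkβkq : kβ < kq := by
    have h1 : (kβ:ℝ) < kq := by rw [hkq, hkβ]; nlinarith
    exact_mod_cast h1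
  have hkq0 : 0 < kq := lt_of_le_of_lt (Nat.zero_le _) hkβkq
  have hn : 0 < n := by
    rcases Nat.eq_zero_or_pos n with h | h
    · exfalso; have := hrow ⟨0, hm⟩; subst h; simpa using this
    · exact h
  -- ## the error vector and the row products
  set e : EuclideanSpace ℝ (Fin n) := xk - xstar with he
  have hek : ∀ k, e k = xk k - xstar k := fun k => rfl
  set u : Fin m → ℝ := fun j => ∑ k, A j k * (xk k - xstar k) with hu
  have hresid : ∀ j, resid A b xk j = η j + ξ j - u j := by
    intro j
    have h1 : bt j = ∑ k, A j k * xstar k := by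
      rw [← hsol]; simp [Matrix.mulVec, dotProduct]
    have h2 : u j = (∑ k, A j k * xk k) - ∑ k, A j k * xstar k := by
      simp only [hu]
      rw [← Finset.sum_sub_distrib]
      exact Finset.sum_congr rfl fun k _ => by ring
    have h3 : ∑ k, xk k * A j k = ∑ k, A j k * xk k :=
      Finset.sum_congr rfl fun k _ => mul_comm _ _
    simp only [resid, hb, Pi.add_apply]
    rw [h1, h3]; linarith [h2]
  have hinner : ∀ j, ⟪e, row A j⟫ = u j := by
    intro j
    have h1 : ⟪e, row A j⟫ = ∑ k, e k * A j k := by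
      simp [PiLp.inner_apply, RCLike.inner_apply, row, mul_comm]
    rw [h1, hu]
    exact Finset.sum_congr rfl fun k _ => by rw [hek k]; ring
  have hnormrow : ∀ j, ‖row A j‖ = 1 := by
    intro j
    rw [EuclideanSpace.norm_eq]
    have : ∑ k, ‖row A j k‖^2 = 1 := by
      rw [← hrow j]; exact Finset.sum_congr rfl fun k _ => by simp [row, sq_abs]
    rw [this, Real.sqrt_one]
  have hstep : ∀ i, ‖(xk + resid A b xk i • row A i) - xstar‖ ^ 2
      = ‖e‖^2 + 2 * resid A b xk i * u i + (resid A b xk i)^2 := by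
    intro i
    have h0 : xk + resid A b xk i • row A i - xstar = e + resid A b xk i • row A i := by
      rw [he]; abel
    rw [h0, norm_add_sq_real, real_inner_smul_right, hinner i, norm_smul]
    simp [hnormrow i, mul_pow, Real.norm_eq_abs, sq_abs]
    ring
  have hucs : ∀ j, |u j| ≤ ‖e‖ := by
    intro j
    rw [← hinner j]
    calc |⟪e, row A j⟫| ≤ ‖e‖ * ‖row A j‖ := abs_real_inner_le_norm _ _
    _ = ‖e‖ := by rw [hnormrow j, mul_one]
  -- ## operator norm facts
  have happ : ∀ (y : EuclideanSpace ℝ (Fin n)) (j : Fin m),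
      ((Matrix.toEuclideanLin A) y) j = ∑ k, A j k * y k := by
    intro y j
    simp [Matrix.toEuclideanLin_apply, Matrix.mulVec, dotProduct]
  have hnorm2 : ∀ y : EuclideanSpace ℝ (Fin m), ‖y‖^2 = ∑ j, (y j)^2 := by
    intro y
    rw [EuclideanSpace.norm_eq, Real.sq_sqrt (by positivity)]
    exact Finset.sum_congr rfl fun j _ => by simp [sq_abs]
  have hopnorm : ∀ y : EuclideanSpace ℝ (Fin n),
      ‖(Matrix.toEuclideanLin A) y‖ ≤ sigmaMax A * ‖y‖ := by
    intro y
    have := (LinearMap.toContinuousLinearMap (Matrix.toEuclideanLin A)).le_opNorm y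
    simpa [sigmaMax] using this
  have husum : ∑ j, (u j)^2 ≤ sigmaMax A ^ 2 * ‖e‖^2 := by
    have h1 : ∑ j, (u j)^2 = ‖(Matrix.toEuclideanLin A) e‖^2 := by
      rw [hnorm2]
      refine Finset.sum_congr rfl fun j _ => ?_
      rw [happ e j, hu]
      exact congrArg (· ^ 2) (Finset.sum_congr rfl fun k _ => by rw [hek k])
    rw [h1]
    calc ‖(Matrix.toEuclideanLin A) e‖^2 ≤ (sigmaMax A * ‖e‖)^2 := by
          apply pow_le_pow_left₀ (norm_nonneg _) (hopnorm e)
    _ = sigmaMax A ^2 * ‖e‖^2 := by ring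
  have hs1 : 1 ≤ sigmaMax A := by
    set j0 : Fin m := ⟨0, hm⟩
    have h1 : ((Matrix.toEuclideanLin A) (row A j0)) j0 = 1 := by
      rw [happ (row A j0) j0, ← hrow j0]
      exact Finset.sum_congr rfl fun k _ => by
        show A j0 k * row A j0 k = A j0 k ^ 2
        rw [show row A j0 k = A j0 k from rfl]; ring
    have h2 : (1:ℝ) ≤ ‖(Matrix.toEuclideanLin A) (row A j0)‖ := by
      have h3 : (1:ℝ)^2 ≤ ‖(Matrix.toEuclideanLin A) (row A j0)‖^2 := by
        rw [hnorm2, one_pow]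
        have h5 := Finset.single_le_sum
          (f := fun j => (((Matrix.toEuclideanLin A) (row A j0)) j)^2)
          (fun j _ => sq_nonneg _) (Finset.mem_univ j0)
        simpa [h1] using h5
      exact (pow_le_pow_iff_left₀ (by norm_num) (norm_nonneg _) two_ne_zero).mp h3
    have h3 := hopnorm (row A j0)
    rw [hnormrow j0, mul_one] at h3
    linarith
  -- ## sigmaSMin nonneg
  have hS0 : 0 ≤ sigmaSMin A (kq - kβ) := by
    apply Real.sInf_nonneg
    rintro tv ⟨I', hI', rfl⟩
    apply Real.sInf_nonneg
    rintro uv ⟨x', hx', rfl⟩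
    positivity
  -- ## quantile facts
  have hQ1 : kq ≤ (Finset.univ.filter fun j => |resid A b xk j| ≤ Q).card := hQ.1
  have hQ2 : (Finset.univ.filter fun j => |resid A b xk j| < Q).card < kq := hQ.2
  have hQ0 : 0 ≤ Q := by
    have h1 : 0 < (Finset.univ.filter fun j => |resid A b xk j| ≤ Q).card :=
      lt_of_lt_of_le hkq0 hQ1
    obtain ⟨j, hj⟩ := Finset.card_pos.mp h1
    have := (Finset.mem_filter.mp hj).2
    exact le_trans (abs_nonneg _) this
  have hT : ∃ T : Finset (Fin m), ((1-q-β)*m + 1 ≤ (T.card:ℝ)) ∧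
      ∀ j ∈ T, ξ j = 0 ∧ Q ≤ |resid A b xk j| := by
    have hcardsum : (Finset.univ.filter fun j => |resid A b xk j| < Q).card
        + (Finset.univ.filter fun j => ¬ |resid A b xk j| < Q).card = m := by
      rw [Finset.card_filter_add_card_filter_not, Finset.card_univ, Fintype.card_fin]
    set T' := Finset.univ.filter fun j => ¬ |resid A b xk j| < Q with hT'
    set T := T'.filter fun j => ξ j = 0 with hTdef
    have h2 : T.card + (T'.filter fun j => ¬ ξ j = 0).card = T'.card := by
      rw [hTdef, Finset.card_filter_add_card_filter_not]
    have h3 : (T'.filter fun j => ¬ ξ j = 0).card ≤ kβ := by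
      refine le_trans (Finset.card_le_card ?_) hsparse
      intro i hi
      simp only [Finset.mem_filter, Finset.mem_univ, true_and] at hi ⊢
      exact hi.2
    have h5 : m + 1 ≤ T.card + kq + kβ := by omega
    refine ⟨T, ?_, ?_⟩
    · have h6 : ((m:ℝ)) + 1 ≤ (T.card:ℝ) + kq + kβ := by exact_mod_cast h5
      rw [hkq, hkβ] at h6; linarith only [h6]
    · intro j hj
      rw [hTdef, Finset.mem_filter] at hj
      refine ⟨hj.2, ?_⟩
      have := hj.1
      rw [hT', Finset.mem_filter] at this
      exact not_lt.mp this.2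
  clear hQ1 hQ2
  -- ## partition of B
  set G := B.filter (fun i => ξ i = 0) with hG
  set Bc := B.filter (fun i => ¬ ξ i = 0) with hBc
  have hsplit : (∑ i ∈ G, (‖e‖^2 + 2 * resid A b xk i * u i + (resid A b xk i)^2))
      + (∑ i ∈ Bc, (‖e‖^2 + 2 * resid A b xk i * u i + (resid A b xk i)^2))
      = ∑ i ∈ B, (‖e‖^2 + 2 * resid A b xk i * u i + (resid A b xk i)^2) := by
    rw [hG, hBc]; exact Finset.sum_filter_add_sum_filter_not B _ _
  have hcards : G.card + Bc.card = kq := by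
    rw [hG, hBc, Finset.card_filter_add_card_filter_not, hBcard]
  have hBccard : Bc.card ≤ kβ := by
    refine le_trans (Finset.card_le_card ?_) hsparse
    intro i hi
    rw [hBc, Finset.mem_filter] at hi
    simp only [Finset.mem_filter, Finset.mem_univ, true_and]
    exact hi.2
  have hGcard : kq - kβ ≤ G.card := by omega
  obtain ⟨I, hIsub, hIcard⟩ := Finset.exists_subset_card_eq hGcard
  -- ## singular value lower bound on the good rows
  have hSsub : sigmaSMin A (kq - kβ) ^2 * ‖e‖^2 ≤ ∑ i ∈ I, (u i)^2 := by
    have hsum0 : 0 ≤ ∑ i ∈ I, (u i)^2 := Finset.sum_nonneg fun i _ => sq_nonneg _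
    rcases eq_or_ne (‖e‖) 0 with h0 | h0
    · rw [h0]; simpa using hsum0
    have hEpos : 0 < ‖e‖ := lt_of_le_of_ne (norm_nonneg e) (Ne.symm h0)
    have hene : e ≠ 0 := by rwa [← norm_ne_zero_iff]
    set x : EuclideanSpace ℝ (Fin n) := (‖e‖)⁻¹ • e with hx
    have hxnorm : ‖x‖ = 1 := norm_smul_inv_norm hene
    have happx : ∀ i, A.mulVec (fun k => x k) i = (‖e‖)⁻¹ * (u i) := by
      intro i
      simp only [Matrix.mulVec, dotProduct, hu]
      rw [Finset.mul_sum]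
      refine Finset.sum_congr rfl fun k _ => ?_
      have hxk : x k = (‖e‖)⁻¹ * e k := by rw [hx]; rfl
      rw [hxk, hek k]; ring
    have hS1 : sigmaSMin A (kq - kβ) ≤
        Real.sqrt (∑ i ∈ I, (A.mulVec (fun k => x k) i)^2) := by
      have hbdd : BddBelow {t : ℝ | ∃ I' : Finset (Fin m), I'.card = kq - kβ ∧
          t = sInf {uv : ℝ | ∃ x' : EuclideanSpace ℝ (Fin n), ‖x'‖ = 1 ∧
            uv = Real.sqrt (∑ i ∈ I', (A.mulVec (fun k => x' k) i) ^ 2)}} := by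
        refine ⟨0, ?_⟩
        rintro tv ⟨I', hI', rfl⟩
        apply Real.sInf_nonneg
        rintro uv ⟨x', hx', rfl⟩
        positivity
      calc sigmaSMin A (kq - kβ)
          ≤ sInf {uv : ℝ | ∃ x' : EuclideanSpace ℝ (Fin n), ‖x'‖ = 1 ∧
            uv = Real.sqrt (∑ i ∈ I, (A.mulVec (fun k => x' k) i) ^ 2)} :=
            csInf_le hbdd ⟨I, hIcard, rfl⟩
      _ ≤ Real.sqrt (∑ i ∈ I, (A.mulVec (fun k => x k) i)^2) := by
            refine csInf_le ?_ ⟨x, hxnorm, rfl⟩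
            refine ⟨0, ?_⟩
            rintro uv ⟨x', hx', rfl⟩
            positivity
    have h2 : ∑ i ∈ I, (A.mulVec (fun k => x k) i)^2 = (‖e‖⁻¹)^2 * ∑ i ∈ I, (u i)^2 := by
      rw [Finset.mul_sum]
      exact Finset.sum_congr rfl fun i _ => by rw [happx i]; ring
    have h3 : sigmaSMin A (kq - kβ) ^2 ≤ (‖e‖⁻¹)^2 * ∑ i ∈ I, (u i)^2 := by
      rw [← h2, ← Real.sq_sqrt (show 0 ≤ ∑ i ∈ I, (A.mulVec (fun k => x k) i)^2 by positivity)]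
      exact pow_le_pow_left₀ hS0 hS1 2
    have h4 := mul_le_mul_of_nonneg_right h3 (sq_nonneg ‖e‖)
    calc sigmaSMin A (kq - kβ) ^2 * ‖e‖^2 ≤ (‖e‖⁻¹)^2 * (∑ i ∈ I, (u i)^2) * ‖e‖^2 := h4
    _ = ∑ i ∈ I, (u i)^2 := by field_simp
  -- ## abbreviations
  set s := sigmaMax A with hsdef
  set S := sigmaSMin A (kq - kβ) with hSdef
  set N := ‖η‖ with hNdef
  set E := ‖e‖ with hEdef
  set sm := Real.sqrt (m:ℝ) with hsm
  set sd := Real.sqrt (1 - q - β) with hsd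
  have hsm2 : sm^2 = (m:ℝ) := Real.sq_sqrt hmR.le
  have hsd2 : sd^2 = 1 - q - β := Real.sq_sqrt hd2.le
  have hsm0 : 0 < sm := Real.sqrt_pos.mpr hmR
  have hsd0 : 0 < sd := Real.sqrt_pos.mpr hd2
  have hs0 : 0 < s := lt_of_lt_of_le one_pos hs1
  have hE0 : 0 ≤ E := by rw [hEdef]; exact norm_nonneg e
  have hN0 : 0 ≤ N := by rw [hNdef]; exact norm_nonneg η
  set t := s / (sm * sd) with ht
  have ht0 : 0 ≤ t := by
    rw [ht]; exact div_nonneg hs0.le (mul_nonneg hsm0.le hsd0.le)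
  set K := 1 + 2*t^2 + 4*t with hK
  set Qb := N + t*E with hQb
  have hηle : ∀ j, |η j| ≤ N := by
    intro j
    have := norm_le_pi_norm η j
    rwa [Real.norm_eq_abs, ← hNdef] at this
  clear_value e u s S N E sm sd t K Qb
  -- ## quantile value bound
  have hQup : Q ≤ Qb := by
    rw [hQb]
    obtain ⟨T, hTcard, hTmem⟩ := hT
    rcases le_or_gt Q N with h | h
    · have h9 := mul_nonneg ht0 hE0; linarith only [h9, h]
    · have key : (T.card:ℝ) * (Q-N)^2 ≤ s^2*E^2 := by
        have h1 : ∀ j ∈ T, (Q-N)^2 ≤ (u j)^2 := by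
          intro j hj
          obtain ⟨hξj, hQr⟩ := hTmem j hj
          have hr : resid A b xk j = η j - u j := by rw [hresid j, hξj]; ring
          have habs : |resid A b xk j| ≤ |η j| + |u j| := by
            rw [hr]; exact abs_sub _ _
          have h2 : Q - N ≤ |u j| := by linarith only [hηle j, hQr, habs]
          nlinarith only [h2, h, sq_abs (u j)]
        calc (T.card:ℝ)*(Q-N)^2 = ∑ _j ∈ T, (Q-N)^2 := by
              rw [Finset.sum_const, nsmul_eq_mul]
        _ ≤ ∑ j ∈ T, (u j)^2 := Finset.sum_le_sum h1
        _ ≤ ∑ j, (u j)^2 := Finset.sum_le_sum_of_subset_of_nonneg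
              (Finset.subset_univ T) (fun _ _ _ => sq_nonneg _)
        _ ≤ s^2*E^2 := husum
      have key2 : ((sm*sd)*(Q-N))^2 ≤ (s*E)^2 := by
        have hd2m : (1-q-β)*m ≤ (T.card:ℝ) := by linarith only [hTcard]
        have h7 : ((sm*sd)*(Q-N))^2 = ((1-q-β)*m) * (Q-N)^2 := by
          rw [mul_pow, mul_pow, hsm2, hsd2]; ring
        have h8 := mul_le_mul_of_nonneg_right hd2m (sq_nonneg (Q-N))
        linarith only [key, h7, h8]
      have h7 : (sm*sd)*(Q-N) ≤ s*E := by
        refine (pow_le_pow_iff_left₀ ?_ ?_ two_ne_zero).mp key2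
        · exact mul_nonneg (mul_nonneg hsm0.le hsd0.le) (by linarith only [h])
        · exact mul_nonneg hs0.le hE0
      have h8 : Q - N ≤ t*E := by
        rw [ht, div_mul_eq_mul_div, le_div_iff₀ (mul_pos hsm0 hsd0)]
        linarith only [h7]
      linarith only [h8]
  -- ## bounding the sums
  have hGsum : ∑ i ∈ G, (E^2 + 2 * resid A b xk i * u i + (resid A b xk i)^2)
      ≤ (G.card:ℝ) * (E^2 + N^2) - ∑ i ∈ I, (u i)^2 := by
    have h1 : ∀ i ∈ G, E^2 + 2 * resid A b xk i * u i + (resid A b xk i)^2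
        ≤ E^2 + N^2 - (u i)^2 := by
      intro i hi
      have hξi : ξ i = 0 := by
        rw [hG, Finset.mem_filter] at hi; exact hi.2
      have hri : resid A b xk i = η i - u i := by rw [hresid i, hξi]; ring
      have hηi := hηle i
      have h2 : (η i)^2 ≤ N^2 := by nlinarith only [hηi, abs_nonneg (η i), sq_abs (η i)]
      rw [hri]; nlinarith only [h2]
    calc ∑ i ∈ G, (E^2 + 2 * resid A b xk i * u i + (resid A b xk i)^2)
        ≤ ∑ i ∈ G, (E^2 + N^2 - (u i)^2) := Finset.sum_le_sum h1
    _ = (G.card:ℝ)*(E^2+N^2) - ∑ i ∈ G, (u i)^2 := by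
        rw [Finset.sum_sub_distrib, Finset.sum_const, nsmul_eq_mul]
    _ ≤ (G.card:ℝ)*(E^2+N^2) - ∑ i ∈ I, (u i)^2 := by
        have h9 := Finset.sum_le_sum_of_subset_of_nonneg hIsub
          (fun i _ _ => sq_nonneg (u i))
        linarith only [h9]
  have hBcsum : ∑ i ∈ Bc, (E^2 + 2 * resid A b xk i * u i + (resid A b xk i)^2)
      ≤ (Bc.card:ℝ) * (E^2 + Q^2 + 2*Q*E) := by
    have h1 : ∀ i ∈ Bc, E^2 + 2 * resid A b xk i * u i + (resid A b xk i)^2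
        ≤ E^2 + Q^2 + 2*Q*E := by
      intro i hi
      have hiB : i ∈ B := by
        rw [hBc] at hi; exact Finset.mem_of_mem_filter i hi
      have hr := hBQ i hiB
      have hru : resid A b xk i * u i ≤ Q * E := by
        calc resid A b xk i * u i ≤ |resid A b xk i * u i| := le_abs_self _
        _ = |resid A b xk i| * |u i| := abs_mul _ _
        _ ≤ Q * E := mul_le_mul hr (hucs i) (abs_nonneg _) hQ0
      have hr2 : (resid A b xk i)^2 ≤ Q^2 := by
        nlinarith only [hr, sq_abs (resid A b xk i), abs_nonneg (resid A b xk i)]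
      linarith only [hru, hr2]
    calc ∑ i ∈ Bc, (E^2 + 2 * resid A b xk i * u i + (resid A b xk i)^2)
        ≤ ∑ _i ∈ Bc, (E^2 + Q^2 + 2*Q*E) := Finset.sum_le_sum h1
    _ = (Bc.card:ℝ)*(E^2+Q^2+2*Q*E) := by rw [Finset.sum_const, nsmul_eq_mul]
  have hW : ∑ i ∈ B, (E^2 + 2 * resid A b xk i * u i + (resid A b xk i)^2)
      ≤ q*m*(E^2+N^2) - S^2*E^2 + β*m*(Qb^2 + 2*Qb*E) := by
    have hGle : (G.card:ℝ) ≤ q*m := by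
      rw [← hkq]; exact_mod_cast Nat.le.intro hcards
    have hBcle : (Bc.card:ℝ) ≤ β*m := by
      rw [← hkβ]; exact_mod_cast hBccard
    have hkqR : (G.card:ℝ) + Bc.card = q*m := by
      rw [← hkq]; exact_mod_cast hcards
    have hQZ0 : 0 ≤ Q^2 + 2*Q*E := by nlinarith only [sq_nonneg Q, mul_nonneg hQ0 hE0]
    have hQZ : Q^2 + 2*Q*E ≤ Qb^2 + 2*Qb*E := by
      have p1 : 0 ≤ (Qb - Q)*(Qb + Q) :=
        mul_nonneg (by linarith only [hQup]) (by linarith only [hQup, hQ0])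
      have p2 : 0 ≤ (Qb - Q)*E := mul_nonneg (by linarith only [hQup]) hE0
      nlinarith only [p1, p2]
    have hb1 : (Bc.card:ℝ)*(Q^2+2*Q*E) ≤ β*m*(Q^2+2*Q*E) :=
      mul_le_mul_of_nonneg_right hBcle hQZ0
    have hb2 : β*m*(Q^2+2*Q*E) ≤ β*m*(Qb^2+2*Qb*E) :=
      mul_le_mul_of_nonneg_left hQZ (mul_nonneg hβ0 hmR.le)
    have hg1 : (G.card:ℝ)*N^2 ≤ q*m*N^2 :=
      mul_le_mul_of_nonneg_right hGle (sq_nonneg N)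
    have hEc : (G.card:ℝ)*E^2 + (Bc.card:ℝ)*E^2 = q*m*E^2 := by
      linear_combination E^2 * hkqR
    rw [← hsplit]
    linarith only [hGsum, hBcsum, hSsub, hb1, hb2, hg1, hEc]
  -- ## the quantile RK contraction bound, scalar part
  have hKdef2 : (1 + 2 * s ^ 2 / (m * (1 - q - β)) + 4 * s / (sm * sd)) = K := by
    rw [hK, ht, div_pow, mul_pow, hsm2, hsd2]; ring
  have hCalt : C = (q-β)*S^2/(q^2*m) - β/q*K := by
    rw [hC, ← hKdef2]
  constructor
  · -- main inequality
    have claim : Qb^2 + 2*Qb*E ≤ 2*N^2 + K*E^2 := by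
      rw [hQb, hK]; nlinarith only [sq_nonneg (N - (1+t)*E)]
    have hpos1 : 0 ≤ q*(1-q-β)*(β*m) :=
      mul_nonneg (mul_nonneg hq0.le hd2.le) (mul_nonneg hβ0 hmR.le)
    have G4 : q*(1-q-β)*(β*m)*(Qb^2+2*Qb*E)
        ≤ (1-q-β)*β*S^2*E^2 + q*(1-q-β)*(β*m)*K*E^2 + 2*q*m*β*(1-q)*N^2 := by
      have h1 : q*(1-q-β)*(β*m)*(Qb^2+2*Qb*E) ≤ q*(1-q-β)*(β*m)*(2*N^2+K*E^2) :=
        mul_le_mul_of_nonneg_left claim hpos1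
      have h2' : 0 ≤ q*β*m*N^2*β :=
        mul_nonneg (mul_nonneg (mul_nonneg (mul_nonneg hq0.le hβ0) hmR.le) (sq_nonneg N)) hβ0
      have h3 : 0 ≤ (1-q-β)*β*S^2*E^2 :=
        mul_nonneg (mul_nonneg (mul_nonneg hd2.le hβ0) (sq_nonneg S)) (sq_nonneg E)
      linarith only [h1, h2', h3]
    have hX : q*(1-q-β)*(q*m*((1-C)*E^2 + (2*β*(1-q)/(q*(1-q-β))+1)*N^2))
        = (q^2*m*(1-q-β))*E^2 - (1-q-β)*(q-β)*S^2*E^2 + q*(1-q-β)*(β*m)*K*E^2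
          + (q^2*m*(1-q-β))*N^2 + 2*q*m*β*(1-q)*N^2 := by
      rw [hCalt]; field_simp [hq0.ne', hmR.ne', hd2.ne']; ring
    have hG3 : (q*(1-q-β))*(q*m*(E^2+N^2) - S^2*E^2 + β*m*(Qb^2+2*Qb*E))
        ≤ (q*(1-q-β))*(q*m*((1-C)*E^2 + (2*β*(1-q)/(q*(1-q-β))+1)*N^2)) := by
      rw [hX]; linarith only [G4]
    have hG2 : q*m*(E^2+N^2) - S^2*E^2 + β*m*(Qb^2+2*Qb*E)
        ≤ q*m*((1-C)*E^2 + (2*β*(1-q)/(q*(1-q-β))+1)*N^2) :=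
      le_of_mul_le_mul_left hG3 (mul_pos hq0 hd2)
    have hsum_eq : ∑ i ∈ B, ‖(xk + resid A b xk i • row A i) - xstar‖ ^ 2
        = ∑ i ∈ B, (E^2 + 2 * resid A b xk i * u i + (resid A b xk i)^2) :=
      Finset.sum_congr rfl fun i _ => hstep i
    calc (1 / (q * m)) * ∑ i ∈ B, ‖(xk + resid A b xk i • row A i) - xstar‖ ^ 2
        = (1 / (q * m)) * ∑ i ∈ B, (E^2 + 2 * resid A b xk i * u i + (resid A b xk i)^2) := by
          rw [hsum_eq]
    _ ≤ (1 / (q * m)) * (q*m*((1-C)*E^2 + (2*β*(1-q)/(q*(1-q-β))+1)*N^2)) := by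
          exact mul_le_mul_of_nonneg_left (le_trans hW hG2) (one_div_pos.mpr hqm).le
    _ = (1-C)*E^2 + (2*β*(1-q)/(q*(1-q-β))+1)*N^2 := by
          rw [one_div, inv_mul_cancel_left₀ (ne_of_gt hqm)]
  · -- positivity of C
    have hs2 : (0:ℝ) < s^2 := pow_pos hs0 2
    have h1 : (q/(q-β)) * (β*m/s^2 + 2*β/(1-q-β) + 4*β*sm/(s*sd)) * s^2 < S^2 :=
      (lt_div_iff₀ hs2).mp hcond
    have h2 : (q-β) * ((q/(q-β)) * (β*m/s^2 + 2*β/(1-q-β) + 4*β*sm/(s*sd)) * s^2)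
        = q^2*m*(β/q*K) := by
      rw [hK, ht, ← hsm2, ← hsd2]
      field_simp
    have h3 := mul_lt_mul_of_pos_left h1 hqβ
    rw [h2] at h3
    rw [hCalt, sub_pos, lt_div_iff₀ (mul_pos (pow_pos hq0 2) hmR)]
    linarith only [h3]
end

section
/- Let β < q₀ < q < 1 − β with q₀m, qm and βm integers. Suppose A x* = b_t, b = b_t + ξ with ‖ξ‖₀ ≤ βm, and x_k ∈ ℝⁿ satisfies ⟨x_k, a_j⟩ = b_j for some j ∈ {1,…,m}. Let B be a set of exactly (q − q₀)m indices with Q₀ ≤ |r_j| ≤ Q for all j ∈ B (obtained by removing from the qm indices at or below the q-quantile a set of q₀m indices at or below the q₀-quantile), and set S := B ∩ supp(ξ). Then (1/|B\S|) Σ_{i∈B\S} ‖(x_k + r_i a_i) − x*‖² ≤ (1 − σ_{q−β,min}(A)²/(qm) − σ_{q₀−β,min}(A)²/(q₀ q m²))·‖x_k − x*‖². -/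
open Finset

lemma sigmaSMin_nonneg {m n : ℕ} (A : Matrix (Fin m) (Fin n) ℝ) (k : ℕ) :
    0 ≤ sigmaSMin A k := by
  apply Real.sInf_nonneg
  rintro t ⟨I, hI, rfl⟩
  apply Real.sInf_nonneg
  rintro u ⟨x, hx, rfl⟩
  exact Real.sqrt_nonneg _

lemma sigmaSMin_le {m n : ℕ} (A : Matrix (Fin m) (Fin n) ℝ) (k : ℕ)
    (I : Finset (Fin m)) (hI : I.card = k)
    (x : EuclideanSpace ℝ (Fin n)) (hx : ‖x‖ = 1) :
    sigmaSMin A k ≤ Real.sqrt (∑ i ∈ I, (A.mulVec (fun k => x k) i) ^ 2) := by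
  have h1 : sigmaSMin A k ≤ sInf {u : ℝ | ∃ x : EuclideanSpace ℝ (Fin n), ‖x‖ = 1 ∧
      u = Real.sqrt (∑ i ∈ I, (A.mulVec (fun k => x k) i) ^ 2)} := by
    apply csInf_le
    · refine ⟨0, ?_⟩
      rintro t ⟨J, hJ, rfl⟩
      apply Real.sInf_nonneg
      rintro u ⟨y, hy, rfl⟩
      exact Real.sqrt_nonneg _
    · exact ⟨I, hI, rfl⟩
  refine le_trans h1 ?_
  apply csInf_le
  · refine ⟨0, ?_⟩
    rintro u ⟨y, hy, rfl⟩
    exact Real.sqrt_nonneg _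
  · exact ⟨x, hx, rfl⟩

lemma sigmaSMin_sq_le {m n : ℕ} (A : Matrix (Fin m) (Fin n) ℝ) (k : ℕ)
    (I : Finset (Fin m)) (hI : I.card = k)
    (x : EuclideanSpace ℝ (Fin n)) (hx : ‖x‖ = 1) :
    sigmaSMin A k ^ 2 ≤ ∑ i ∈ I, (A.mulVec (fun k => x k) i) ^ 2 := by
  have h := sigmaSMin_le A k I hI x hx
  have hs : 0 ≤ ∑ i ∈ I, (A.mulVec (fun k => x k) i) ^ 2 :=
    Finset.sum_nonneg fun i _ => sq_nonneg _
  calc sigmaSMin A k ^ 2 ≤ Real.sqrt (∑ i ∈ I, (A.mulVec (fun k => x k) i) ^ 2) ^ 2 :=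
        pow_le_pow_left₀ (sigmaSMin_nonneg A k) h 2
    _ = _ := Real.sq_sqrt hs

lemma sigmaSMin_key {m n K : ℕ} (A : Matrix (Fin m) (Fin n) ℝ)
    (d : EuclideanSpace ℝ (Fin n)) (hd : d ≠ 0) (I : Finset (Fin m))
    (hKI : K ≤ I.card) :
    ∃ J, J ⊆ I ∧ J.card = K ∧
      sigmaSMin A K ^ 2 * ‖d‖ ^ 2 ≤ ∑ i ∈ J, (A.mulVec (fun k => d k) i) ^ 2 := by
  obtain ⟨J, hJI, hJcard⟩ := Finset.exists_subset_card_eq hKI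
  refine ⟨J, hJI, hJcard, ?_⟩
  have hdn : ‖d‖ ≠ 0 := norm_ne_zero_iff.mpr hd
  set x : EuclideanSpace ℝ (Fin n) := ‖d‖⁻¹ • d with hxdef
  have hx : ‖x‖ = 1 := norm_smul_inv_norm hd
  have h := sigmaSMin_sq_le A K J hJcard x hx
  have hfun : (fun k => x k) = (‖d‖⁻¹ • fun k => d k) := by
    funext k
    simp [hxdef]
  rw [hfun] at h
  have hmv : ∀ i, A.mulVec (‖d‖⁻¹ • fun k => d k) i = ‖d‖⁻¹ * A.mulVec (fun k => d k) i := by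
    intro i
    rw [Matrix.mulVec_smul]
    rfl
  simp only [hmv, mul_pow, ← Finset.mul_sum] at h
  have h2 : ‖d‖ ^ 2 * sigmaSMin A K ^ 2 ≤
      ‖d‖ ^ 2 * ((‖d‖⁻¹) ^ 2 * ∑ i ∈ J, (A.mulVec (fun k => d k) i) ^ 2) :=
    mul_le_mul_of_nonneg_left h (sq_nonneg _)
  rw [← mul_assoc] at h2
  rw [mul_comm]
  calc ‖d‖ ^ 2 * sigmaSMin A K ^ 2 ≤ _ := h2
    _ = ∑ i ∈ J, (A.mulVec (fun k => d k) i) ^ 2 := by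
        field_simp

lemma inner_row {m n : ℕ} (A : Matrix (Fin m) (Fin n) ℝ) (j : Fin m)
    (x : EuclideanSpace ℝ (Fin n)) :
    inner ℝ (row A j) x = A.mulVec (fun k => x k) j := by
  simp [row, PiLp.inner_apply, RCLike.inner_apply, Matrix.mulVec, dotProduct,
    mul_comm]

lemma sigmaSMin_sq_le_card {m n K : ℕ} (A : Matrix (Fin m) (Fin n) ℝ)
    (hrow : ∀ j, ∑ k, (A j k) ^ 2 = 1)
    (d : EuclideanSpace ℝ (Fin n)) (hd : d ≠ 0) (hK : K ≤ m) :
    sigmaSMin A K ^ 2 ≤ (K : ℝ) := by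
  obtain ⟨I, hIsub, hIcard⟩ := Finset.exists_subset_card_eq
    (show K ≤ (Finset.univ : Finset (Fin m)).card by simpa using hK)
  set x : EuclideanSpace ℝ (Fin n) := ‖d‖⁻¹ • d with hxdef
  have hx : ‖x‖ = 1 := norm_smul_inv_norm hd
  have h := sigmaSMin_sq_le A K I hIcard x hx
  refine h.trans ?_
  calc ∑ i ∈ I, (A.mulVec (fun k => x k) i) ^ 2 ≤ ∑ _i ∈ I, (1:ℝ) := by
        apply Finset.sum_le_sum
        intro i _
        rw [← inner_row]
        have := real_inner_mul_inner_self_le (row A i) x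
        rw [real_inner_self_eq_norm_sq, real_inner_self_eq_norm_sq, hx] at this
        have h2 : ‖row A i‖ ^ 2 = 1 := by
          rw [EuclideanSpace.norm_eq, Real.sq_sqrt (by positivity)]
          simpa [row, sq_abs] using hrow i
        nlinarith [this]
    _ = (K:ℝ) := by simp [hIcard]

lemma resid_clean {m n : ℕ} (A : Matrix (Fin m) (Fin n) ℝ)
    (xstar xk : EuclideanSpace ℝ (Fin n)) (bt b ξ : Fin m → ℝ)
    (hsol : A.mulVec (fun k => xstar k) = bt) (hb : b = bt + ξ)
    (i : Fin m) (hclean : ξ i = 0) :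
    resid A b xk i = A.mulVec (fun k => (xstar - xk) k) i := by
  have hbt : bt i = A.mulVec (fun k => xstar k) i := by rw [hsol]
  simp only [resid, hb, Pi.add_apply, hclean, add_zero, hbt, Matrix.mulVec,
    dotProduct]
  rw [← Finset.sum_sub_distrib]
  congr 1
  funext k
  have : (xstar - xk) k = xstar k - xk k := rfl
  rw [this]
  ring

lemma norm_step {m n : ℕ} (A : Matrix (Fin m) (Fin n) ℝ)
    (hrow : ∀ j, ∑ k, (A j k) ^ 2 = 1)
    (xstar xk : EuclideanSpace ℝ (Fin n)) (i : Fin m) (r : ℝ)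
    (hr : r = inner ℝ (row A i) (xstar - xk)) :
    ‖(xk + r • row A i) - xstar‖ ^ 2 = ‖xk - xstar‖ ^ 2 - r ^ 2 := by
  have hre : (xk + r • row A i) - xstar = r • row A i - (xstar - xk) := by abel
  rw [hre, norm_sub_sq_real]
  have h2 : ‖row A i‖ ^ 2 = 1 := by
    rw [EuclideanSpace.norm_eq, Real.sq_sqrt (by positivity)]
    simpa [row, sq_abs] using hrow i
  have h3 : inner ℝ (r • row A i) (xstar - xk) = r * (inner ℝ (row A i) (xstar - xk) : ℝ) :=
    real_inner_smul_left _ _ _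
  have h4 : ‖xk - xstar‖ = ‖xstar - xk‖ := norm_sub_rev _ _
  rw [h3, ← hr, norm_smul, h4]
  have : (‖r‖ * ‖row A i‖) ^ 2 = r ^ 2 * ‖row A i‖^2 := by
    rw [mul_pow]; congr 1; exact sq_abs r
  rw [this, h2]
  ring

set_option maxHeartbeats 1000000 in
theorem dqrk_noncorrupt_rows_bound
    {m n : ℕ} (A : Matrix (Fin m) (Fin n) ℝ)
    (q₀ q β : ℝ) (kq₀ kq kβ : ℕ)
    (hm : 0 < m) (hmn : n ≤ m) (hrank : A.rank = n)
    (hrow : ∀ j, ∑ k, (A j k) ^ 2 = 1)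
    (hβq₀ : β < q₀) (hq₀q : q₀ < q) (hq1 : q < 1 - β)
    (hkq₀ : (kq₀ : ℝ) = q₀ * m) (hkq : (kq : ℝ) = q * m) (hkβ : (kβ : ℝ) = β * m)
    (xstar : EuclideanSpace ℝ (Fin n)) (bt b ξ : Fin m → ℝ)
    (hsol : A.mulVec (fun k => xstar k) = bt)
    (hb : b = bt + ξ)
    (hsparse : (Finset.univ.filter fun j => ξ j ≠ 0).card ≤ kβ)
    (xk : EuclideanSpace ℝ (Fin n))
    (hsolve : ∃ j, ∑ k, xk k * A j k = b j)
    (Q₀ Q : ℝ)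
    (hQ₀ : IsQuantile (fun j => |resid A b xk j|) kq₀ Q₀)
    (hQ : IsQuantile (fun j => |resid A b xk j|) kq Q)
    (B : Finset (Fin m)) (hBcard : B.card = kq - kq₀)
    (hBQ : ∀ j ∈ B, Q₀ ≤ |resid A b xk j| ∧ |resid A b xk j| ≤ Q)
    (hBstruct : ∃ Bq B₀ : Finset (Fin m), B₀ ⊆ Bq ∧ Bq.card = kq ∧ B₀.card = kq₀ ∧
      (∀ j ∈ Bq, |resid A b xk j| ≤ Q) ∧ (∀ j ∈ B₀, |resid A b xk j| ≤ Q₀) ∧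
      B = Bq \ B₀)
    (S : Finset (Fin m)) (hS : S = B.filter fun j => ξ j ≠ 0) :
    (1 / (((B \ S).card : ℝ))) *
        ∑ i ∈ B \ S, ‖(xk + resid A b xk i • row A i) - xstar‖ ^ 2 ≤
      (1 - sigmaSMin A (kq - kβ) ^ 2 / (q * m) -
        sigmaSMin A (kq₀ - kβ) ^ 2 / (q₀ * q * m ^ 2)) * ‖xk - xstar‖ ^ 2 := by
  obtain ⟨Bq, B₀, hB₀Bq, hBqcard, hB₀card, hBqQ, hB₀Q₀, hBdef⟩ := hBstruct
  obtain ⟨j₀, hj₀⟩ := hsolve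
  -- basic numeric facts
  have hm' : (0:ℝ) < m := by exact_mod_cast hm
  have hβ0 : 0 ≤ β := by
    by_contra hc
    push_neg at hc
    have : (kβ:ℝ) < 0 := by rw [hkβ]; exact mul_neg_of_neg_of_pos hc hm'
    exact absurd this (not_lt.mpr (Nat.cast_nonneg _))
  have hq₀pos : 0 < q₀ := lt_of_le_of_lt hβ0 hβq₀
  have hqpos : 0 < q := lt_trans hq₀pos hq₀q
  have hkβkq₀ : kβ < kq₀ := by
    have : (kβ:ℝ) < (kq₀:ℝ) := by rw [hkβ, hkq₀]; exact mul_lt_mul_of_pos_right hβq₀ hm'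
    exact_mod_cast this
  have hkq₀kq : kq₀ < kq := by
    have : (kq₀:ℝ) < (kq:ℝ) := by rw [hkq₀, hkq]; exact mul_lt_mul_of_pos_right hq₀q hm'
    exact_mod_cast this
  have hkq₀pos : 0 < kq₀ := Nat.pos_of_ne_zero (by omega)
  have hkqm : kq ≤ m := by
    have : (kq:ℝ) ≤ (m:ℝ) := by
      rw [hkq]
      nlinarith
    exact_mod_cast this
  -- the corrupted index set
  set E : Finset (Fin m) := Finset.univ.filter (fun j => ξ j ≠ 0) with hE
  set Bc : Finset (Fin m) := Bq \ E with hBc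
  set B₀c : Finset (Fin m) := B₀ \ E with hB₀c
  have hcleanBc : ∀ i ∈ Bc, ξ i = 0 := by
    intro i hi
    rw [hBc, Finset.mem_sdiff, hE, Finset.mem_filter] at hi
    by_contra hc
    exact hi.2 ⟨Finset.mem_univ i, hc⟩
  have hsubc : B₀c ⊆ Bc := by
    intro i hi
    rw [hB₀c, Finset.mem_sdiff] at hi
    rw [hBc, Finset.mem_sdiff]
    exact ⟨hB₀Bq hi.1, hi.2⟩
  have hBS_eq : B \ S = Bc \ B₀c := by
    ext i
    simp only [Finset.mem_sdiff, hBdef, hS, hBc, hB₀c, hE, Finset.mem_filter,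
      Finset.mem_univ, true_and]
    tauto
  have hcleanBS : ∀ i ∈ B \ S, ξ i = 0 := by
    intro i hi
    rw [hBS_eq] at hi
    exact hcleanBc i (Finset.mem_sdiff.mp hi).1
  -- residual zero at j₀
  have hr0 : resid A b xk j₀ = 0 := by
    simp [resid, hj₀]
  -- Q₀ nonneg
  have hQ₀nn : 0 ≤ Q₀ := by
    have hQ₀1 : kq₀ ≤ (Finset.univ.filter fun j => |resid A b xk j| ≤ Q₀).card := by
      simpa using hQ₀.1
    have hne : (Finset.univ.filter fun j => |resid A b xk j| ≤ Q₀).Nonempty := by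
      rw [← Finset.card_pos]
      omega
    obtain ⟨j, hj⟩ := hne
    rw [Finset.mem_filter] at hj
    exact le_trans (abs_nonneg _) hj.2
  by_cases hxx : xk = xstar
  · -- trivial case
    subst hxx
    have hz : ∀ i ∈ B \ S, ‖(xk + resid A b xk i • row A i) - xk‖ ^ 2 = 0 := by
      intro i hi
      have hri : resid A b xk i = A.mulVec (fun k => (xk - xk) k) i :=
        resid_clean A xk xk bt b ξ hsol hb i (hcleanBS i hi)
      have : resid A b xk i = 0 := by
        rw [hri]
        have : (fun k => (xk - xk) k) = (fun _ => (0:ℝ)) := by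
          funext k; simp
        rw [this]
        simp [Matrix.mulVec, dotProduct]
      rw [this]
      simp
    rw [Finset.sum_congr rfl hz]
    simp
  · -- main case
    have hd : xstar - xk ≠ 0 := sub_ne_zero.mpr (Ne.symm hxx)
    set d : EuclideanSpace ℝ (Fin n) := xstar - xk with hddef
    set D : ℝ := ‖xk - xstar‖ ^ 2 with hDdef
    have hDd : D = ‖d‖ ^ 2 := by rw [hDdef, hddef, norm_sub_rev]
    have hDpos : 0 < D := by
      rw [hDd]
      exact pow_pos (norm_pos_iff.mpr hd) 2
    -- key lemma specialized
    have keyR : ∀ (K : ℕ) (I : Finset (Fin m)), (∀ i ∈ I, ξ i = 0) → K ≤ I.card →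
        sigmaSMin A K ^ 2 * D ≤ ∑ i ∈ I, (resid A b xk i) ^ 2 := by
      intro K I hIclean hKI
      obtain ⟨J, hJI, hJcard, hle⟩ := sigmaSMin_key A d hd I hKI
      rw [← hDd] at hle
      refine le_trans hle ?_
      have heq : ∑ i ∈ J, (A.mulVec (fun k => d k) i) ^ 2
          = ∑ i ∈ J, (resid A b xk i) ^ 2 := by
        apply Finset.sum_congr rfl
        intro i hi
        rw [resid_clean A xstar xk bt b ξ hsol hb i (hIclean i (hJI hi))]
      rw [heq]
      exact Finset.sum_le_sum_of_subset_of_nonneg hJI (fun i _ _ => sq_nonneg _)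
    have keyRcap : ∀ (K : ℕ) (I : Finset (Fin m)) (cap : ℝ), 0 ≤ cap →
        (∀ i ∈ I, ξ i = 0) → K ≤ I.card → (∀ i ∈ I, |resid A b xk i| ≤ cap) →
        sigmaSMin A K ^ 2 * D ≤ (K : ℝ) * cap ^ 2 := by
      intro K I cap hcap hIclean hKI hIcap
      obtain ⟨J, hJI, hJcard, hle⟩ := sigmaSMin_key A d hd I hKI
      rw [← hDd] at hle
      refine le_trans hle ?_
      have heq : ∑ i ∈ J, (A.mulVec (fun k => d k) i) ^ 2
          = ∑ i ∈ J, (resid A b xk i) ^ 2 := by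
        apply Finset.sum_congr rfl
        intro i hi
        rw [resid_clean A xstar xk bt b ξ hsol hb i (hIclean i (hJI hi))]
      rw [heq]
      calc ∑ i ∈ J, (resid A b xk i) ^ 2 ≤ ∑ _i ∈ J, cap ^ 2 := by
            apply Finset.sum_le_sum
            intro i hi
            have := hIcap i (hJI hi)
            calc (resid A b xk i)^2 = |resid A b xk i|^2 := (sq_abs _).symm
              _ ≤ cap ^2 := by
                apply pow_le_pow_left₀ (abs_nonneg _) this
          _ = (J.card : ℝ) * cap ^ 2 := by
            rw [Finset.sum_const, nsmul_eq_mul]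
          _ = (K : ℝ) * cap ^ 2 := by rw [hJcard]
    -- abbreviations
    set T : ℝ := ∑ i ∈ B \ S, (resid A b xk i) ^ 2 with hT
    set u : ℝ := ∑ i ∈ B₀c, (resid A b xk i) ^ 2 with hu
    set C : ℝ := ((B \ S).card : ℝ) with hC
    set N₀ : ℝ := (B₀c.card : ℝ) with hN₀
    set KQ : ℝ := (kq : ℝ) with hKQ
    set KQ₀ : ℝ := (kq₀ : ℝ) with hKQ₀
    set sq : ℝ := sigmaSMin A (kq - kβ) with hsq
    set s0 : ℝ := sigmaSMin A (kq₀ - kβ) with hs0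
    have hTnn : 0 ≤ T := Finset.sum_nonneg fun i _ => sq_nonneg _
    have hunn : 0 ≤ u := Finset.sum_nonneg fun i _ => sq_nonneg _
    have hsqnn : 0 ≤ sq := sigmaSMin_nonneg A _
    have hs0nn : 0 ≤ s0 := sigmaSMin_nonneg A _
    -- card facts
    have hcardBc : kq - kβ ≤ Bc.card := by
      have h1 : Bq.card ≤ (Bq \ E).card + E.card := Finset.card_le_card_sdiff_add_card
      rw [← hBc] at h1
      rw [hBqcard] at h1
      omega
    have hcardB₀c : kq₀ - kβ ≤ B₀c.card := by
      have h1 : B₀.card ≤ (B₀ \ E).card + E.card := Finset.card_le_card_sdiff_add_card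
      rw [← hB₀c] at h1
      rw [hB₀card] at h1
      omega
    have hCN₀ : C + N₀ ≤ KQ := by
      have h1 : (Bc \ B₀c).card + B₀c.card = Bc.card :=
        Finset.card_sdiff_add_card_eq_card hsubc
      have h2 : Bc.card ≤ Bq.card := Finset.card_le_card Finset.sdiff_subset
      rw [hBqcard] at h2
      rw [hC, hN₀, hKQ, hBS_eq]
      have h3 : (Bc \ B₀c).card + B₀c.card ≤ kq := by omega
      exact_mod_cast h3
    have hCnn : 0 ≤ C := by rw [hC]; positivity
    have hN₀nn : 0 ≤ N₀ := by rw [hN₀]; positivity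
    have hKQ₀pos : (0:ℝ) < KQ₀ := by
      rw [hKQ₀]
      exact_mod_cast hkq₀pos
    have hKQpos : (0:ℝ) < KQ := by
      rw [hKQ]
      exact_mod_cast Nat.pos_of_ne_zero (by omega)
    -- F1 : C * Q₀^2 ≤ T
    have hF1 : C * Q₀ ^ 2 ≤ T := by
      rw [hT, hC]
      calc ((B\S).card : ℝ) * Q₀ ^ 2 = ∑ _i ∈ B \ S, Q₀ ^ 2 := by
            rw [Finset.sum_const, nsmul_eq_mul]
        _ ≤ ∑ i ∈ B \ S, (resid A b xk i) ^ 2 := by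
            apply Finset.sum_le_sum
            intro i hi
            have h1 := (hBQ i (Finset.mem_sdiff.mp hi).1).1
            calc Q₀ ^ 2 ≤ |resid A b xk i| ^ 2 := pow_le_pow_left₀ hQ₀nn h1 2
              _ = _ := sq_abs _
    -- F2 : u ≤ N₀ * Q₀^2
    have hF2 : u ≤ N₀ * Q₀ ^ 2 := by
      rw [hu, hN₀]
      calc ∑ i ∈ B₀c, (resid A b xk i) ^ 2 ≤ ∑ _i ∈ B₀c, Q₀ ^ 2 := by
            apply Finset.sum_le_sum
            intro i hi
            have h1 := hB₀Q₀ i (Finset.mem_sdiff.mp hi).1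
            calc (resid A b xk i) ^ 2 = |resid A b xk i| ^ 2 := (sq_abs _).symm
              _ ≤ Q₀ ^ 2 := pow_le_pow_left₀ (abs_nonneg _) h1 2
        _ = (B₀c.card : ℝ) * Q₀ ^ 2 := by rw [Finset.sum_const, nsmul_eq_mul]
    -- F3 : sq^2 * D ≤ T + u
    have hTu : T + u = ∑ i ∈ Bc, (resid A b xk i) ^ 2 := by
      rw [hT, hu, hBS_eq]
      exact Finset.sum_sdiff hsubc
    have hF3 : sq ^ 2 * D ≤ T + u := by
      rw [hTu, hsq]
      exact keyR (kq - kβ) Bc hcleanBc hcardBc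
    -- F4 : s0^2 * D ≤ KQ₀ * Q₀^2
    have hcleanB₀c : ∀ i ∈ B₀c, ξ i = 0 := fun i hi => hcleanBc i (hsubc hi)
    have hF4 : s0 ^ 2 * D ≤ KQ₀ * Q₀ ^ 2 := by
      have h1 : s0 ^ 2 * D ≤ ((kq₀ - kβ : ℕ) : ℝ) * Q₀ ^ 2 := by
        rw [hs0]
        exact keyRcap (kq₀ - kβ) B₀c Q₀ hQ₀nn hcleanB₀c hcardB₀c
          (fun i hi => hB₀Q₀ i (Finset.mem_sdiff.mp hi).1)
      refine le_trans h1 ?_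
      apply mul_le_mul_of_nonneg_right _ (sq_nonneg _)
      rw [hKQ₀]
      exact_mod_cast Nat.sub_le _ _
    have hCBc : C + N₀ = (Bc.card : ℝ) := by
      have h1 : (Bc \ B₀c).card + B₀c.card = Bc.card :=
        Finset.card_sdiff_add_card_eq_card hsubc
      rw [hC, hN₀, hBS_eq]
      exact_mod_cast h1
    clear_value T u C N₀ KQ KQ₀ sq s0 D d
    -- main inequality by cases
    have main0 : C * (KQ₀ * sq ^ 2 + s0 ^ 2) * D ≤ KQ * KQ₀ * T := by
      by_cases hC0 : (B \ S).card = 0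
      · have hCe : C = 0 := by rw [hC, hC0]; simp
        rw [hCe]
        have : (0:ℝ) ≤ KQ * KQ₀ * T :=
          mul_nonneg (mul_nonneg hKQpos.le hKQ₀pos.le) hTnn
        linarith
      · -- nonempty noncorrupted set
        have hCpos : (0:ℝ) < C := by
          rw [hC]
          exact_mod_cast Nat.pos_of_ne_zero hC0
        -- final combination given the key step
        have finisher : C * (sq ^ 2 * D) + C * Q₀ ^ 2 ≤ KQ * T →
            C * (KQ₀ * sq ^ 2 + s0 ^ 2) * D ≤ KQ * KQ₀ * T := by
          intro hstep
          have h5 : KQ₀ * (C * (sq ^ 2 * D) + C * Q₀ ^ 2) ≤ KQ₀ * (KQ * T) :=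
            mul_le_mul_of_nonneg_left hstep hKQ₀pos.le
          have h6 : C * (s0 ^ 2 * D) ≤ C * (KQ₀ * Q₀ ^ 2) :=
            mul_le_mul_of_nonneg_left hF4 hCnn
          linarith [h5, h6]
        by_cases hA : j₀ ∈ B \ S
        · -- case A : zero residual row in B \ S, so Q₀ = 0
          have hQ₀z : Q₀ = 0 := by
            have h1 := (hBQ j₀ (Finset.mem_sdiff.mp hA).1).1
            rw [hr0] at h1
            simp only [abs_zero] at h1
            linarith
          have hu0 : u ≤ 0 := by
            rw [hQ₀z] at hF2
            simpa using hF2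
          have h5 : sq ^ 2 * D ≤ T := by
            linarith [hF3]
          have h6 : C * KQ₀ * (sq ^ 2 * D) ≤ C * KQ₀ * T :=
            mul_le_mul_of_nonneg_left h5 (mul_nonneg hCnn hKQ₀pos.le)
          have h7 : C * KQ₀ * T ≤ KQ * KQ₀ * T := by
            have hCKQ : C ≤ KQ := by linarith
            exact mul_le_mul_of_nonneg_right
              (mul_le_mul_of_nonneg_right hCKQ hKQ₀pos.le) hTnn
          have h8 : C * (s0 ^ 2 * D) ≤ 0 := by
            have h9 : s0 ^ 2 * D ≤ 0 := by
              rw [hQ₀z] at hF4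
              simpa using hF4
            exact mul_nonpos_of_nonneg_of_nonpos hCnn h9
          linarith [h6, h7, h8]
        · apply finisher
          by_cases hBclt : Bc.card < kq
          · -- case B-I : some corruption inside Bq
            have hKQC1 : C + N₀ + 1 ≤ KQ := by
              have : (Bc.card : ℝ) + 1 ≤ KQ := by
                rw [hKQ]
                exact_mod_cast hBclt
              linarith [hCBc]
            have h1 : C * (sq ^ 2 * D) ≤ C * (T + u) := mul_le_mul_of_nonneg_left hF3 hCnn
            have h2 : C * u ≤ C * (N₀ * Q₀ ^ 2) := mul_le_mul_of_nonneg_left hF2 hCnn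
            have h3 : (KQ - C) * (C * Q₀ ^ 2) ≤ (KQ - C) * T :=
              mul_le_mul_of_nonneg_left hF1 (by linarith)
            have h4 : 0 ≤ (KQ - C - N₀ - 1) * (C * Q₀ ^ 2) :=
              mul_nonneg (by linarith) (mul_nonneg hCnn (sq_nonneg _))
            linarith [h1, h2, h3, h4]
          · -- Bq is entirely clean
            have hBcq : Bc.card = kq := by
              have h1 : Bc.card ≤ Bq.card := Finset.card_le_card Finset.sdiff_subset
              omega
            have hBcBq : Bc = Bq :=
              Finset.eq_of_subset_of_card_le (show Bc ⊆ Bq from Finset.sdiff_subset)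
                (by omega)
            have hcleanBq : ∀ i ∈ Bq, ξ i = 0 := by
              intro i hi
              exact hcleanBc i (by rw [hBcBq]; exact hi)
            have hTuBq : T + u = ∑ i ∈ Bq, (resid A b xk i) ^ 2 := by
              rw [hTu, hBcBq]
            by_cases hj₀B₀ : j₀ ∈ B₀
            · -- case B-II : zero residual row inside B₀
              have hj₀B₀c : j₀ ∈ B₀c := by
                rw [hB₀c, Finset.mem_sdiff]
                refine ⟨hj₀B₀, ?_⟩
                rw [hE, Finset.mem_filter]
                push_neg
                intro _
                exact hcleanBq j₀ (hB₀Bq hj₀B₀)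
              have hF2' : u ≤ (N₀ - 1) * Q₀ ^ 2 := by
                have hsplit : ∑ i ∈ B₀c.erase j₀, (resid A b xk i) ^ 2
                    = (∑ i ∈ B₀c, (resid A b xk i) ^ 2) - resid A b xk j₀ ^ 2 :=
                  Finset.sum_erase_eq_sub hj₀B₀c
                rw [← hu] at hsplit
                have hz : resid A b xk j₀ ^ 2 = 0 := by rw [hr0]; ring
                have hbound : ∑ i ∈ B₀c.erase j₀, (resid A b xk i) ^ 2 ≤
                    ((B₀c.erase j₀).card : ℝ) * Q₀ ^ 2 := by
                  calc ∑ i ∈ B₀c.erase j₀, (resid A b xk i) ^ 2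
                      ≤ ∑ _i ∈ B₀c.erase j₀, Q₀ ^ 2 := by
                        apply Finset.sum_le_sum
                        intro i hi
                        have h1 := hB₀Q₀ i
                          (Finset.mem_sdiff.mp (Finset.mem_of_mem_erase hi)).1
                        calc (resid A b xk i) ^ 2 = |resid A b xk i| ^ 2 := (sq_abs _).symm
                          _ ≤ Q₀ ^ 2 := pow_le_pow_left₀ (abs_nonneg _) h1 2
                    _ = _ := by rw [Finset.sum_const, nsmul_eq_mul]
                have hcarde : ((B₀c.erase j₀).card : ℝ) = N₀ - 1 := by
                  rw [Finset.card_erase_of_mem hj₀B₀c, hN₀]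
                  have : 1 ≤ B₀c.card := Finset.card_pos.mpr ⟨j₀, hj₀B₀c⟩
                  push_cast [Nat.cast_sub this]
                  ring
                rw [hcarde] at hbound
                linarith
              have h1 : C * (sq ^ 2 * D) ≤ C * (T + u) := mul_le_mul_of_nonneg_left hF3 hCnn
              have h2 : C * u ≤ C * ((N₀ - 1) * Q₀ ^ 2) := mul_le_mul_of_nonneg_left hF2' hCnn
              have h3 : (KQ - C) * (C * Q₀ ^ 2) ≤ (KQ - C) * T :=
                mul_le_mul_of_nonneg_left hF1 (by linarith)
              have h4 : 0 ≤ (KQ - C - N₀) * (C * Q₀ ^ 2) :=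
                mul_nonneg (by linarith) (mul_nonneg hCnn (sq_nonneg _))
              linarith [h1, h2, h3, h4]
            · -- j₀ is not in Bq at all
              have hj₀Bq : j₀ ∉ Bq := by
                intro hc
                have hj₀B : j₀ ∈ B := by
                  rw [hBdef, Finset.mem_sdiff]
                  exact ⟨hc, hj₀B₀⟩
                have hj₀S : j₀ ∈ S := by
                  by_contra hcc
                  exact hA (Finset.mem_sdiff.mpr ⟨hj₀B, hcc⟩)
                rw [hS, Finset.mem_filter] at hj₀S
                exact hj₀S.2 (hcleanBq j₀ hc)
              obtain ⟨istar, histar⟩ : (B \ S).Nonempty := by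
                rw [← Finset.card_pos]
                omega
              have histarBq : istar ∈ Bq := by
                have := (Finset.mem_sdiff.mp histar).1
                rw [hBdef, Finset.mem_sdiff] at this
                exact this.1
              have hsum_erase : ∑ i ∈ Bq.erase istar, (resid A b xk i) ^ 2
                  = (T + u) - resid A b xk istar ^ 2 := by
                rw [Finset.sum_erase_eq_sub histarBq, ← hTuBq]
              have hri : Q₀ ^ 2 ≤ resid A b xk istar ^ 2 := by
                have h1 := (hBQ istar (Finset.mem_sdiff.mp histar).1).1
                calc Q₀ ^ 2 ≤ |resid A b xk istar| ^ 2 := pow_le_pow_left₀ hQ₀nn h1 2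
                  _ = _ := sq_abs _
              have hF3' : sq ^ 2 * D + Q₀ ^ 2 ≤ T + u := by
                by_cases hξ0 : ξ j₀ = 0
                · -- insert the clean zero-residual row
                  set V : Finset (Fin m) := insert j₀ (Bq.erase istar) with hV
                  have hVclean : ∀ i ∈ V, ξ i = 0 := by
                    intro i hi
                    rw [hV, Finset.mem_insert] at hi
                    rcases hi with h | h
                    · rw [h]; exact hξ0
                    · exact hcleanBq i (Finset.mem_of_mem_erase h)
                  have hVcard : V.card = kq := by
                    rw [hV, Finset.card_insert_of_notMem
                      (fun h => hj₀Bq (Finset.mem_of_mem_erase h)),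
                      Finset.card_erase_of_mem histarBq, hBqcard]
                    omega
                  have hkey := keyR (kq - kβ) V hVclean (by omega)
                  have hVsum : ∑ i ∈ V, (resid A b xk i) ^ 2
                      = (T + u) - resid A b xk istar ^ 2 := by
                    rw [hV, Finset.sum_insert
                      (fun h => hj₀Bq (Finset.mem_of_mem_erase h)), hr0, hsum_erase]
                    ring
                  rw [hVsum, ← hsq] at hkey
                  linarith
                · -- j₀ corrupted : kβ ≥ 1
                  have hkβ1 : 1 ≤ kβ := by
                    have h1 : j₀ ∈ E := by
                      rw [hE, Finset.mem_filter]
                      exact ⟨Finset.mem_univ _, hξ0⟩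
                    have h2 : 1 ≤ E.card := Finset.card_pos.mpr ⟨j₀, h1⟩
                    omega
                  have hVclean : ∀ i ∈ Bq.erase istar, ξ i = 0 :=
                    fun i hi => hcleanBq i (Finset.mem_of_mem_erase hi)
                  have hVcard : (Bq.erase istar).card = kq - 1 := by
                    rw [Finset.card_erase_of_mem histarBq, hBqcard]
                  have hkey := keyR (kq - kβ) (Bq.erase istar) hVclean (by omega)
                  rw [hsum_erase, ← hsq] at hkey
                  linarith
              have h1 : C * (sq ^ 2 * D + Q₀ ^ 2) ≤ C * (T + u) :=
                mul_le_mul_of_nonneg_left hF3' hCnn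
              have h2 : C * u ≤ C * (N₀ * Q₀ ^ 2) := mul_le_mul_of_nonneg_left hF2 hCnn
              have h3 : (KQ - C) * (C * Q₀ ^ 2) ≤ (KQ - C) * T :=
                mul_le_mul_of_nonneg_left hF1 (by linarith)
              have h4 : 0 ≤ (KQ - C - N₀) * (C * Q₀ ^ 2) :=
                mul_nonneg (by linarith) (mul_nonneg hCnn (sq_nonneg _))
              linarith [h1, h2, h3, h4]
    -- rewrite the denominators
    have hm2 : q₀ * q * (m:ℝ) ^ 2 = KQ₀ * KQ := by
      rw [hkq, hkq₀]
      ring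
    -- final conversion
    by_cases hCzero : (B \ S).card = 0
    · have hBempty : B \ S = ∅ := Finset.card_eq_zero.mp hCzero
      rw [hBempty]
      simp only [Finset.sum_empty, mul_zero]
      -- RHS is nonnegative because kβ ≥ 1 here
      have hkβ1 : 1 ≤ kβ := by
        have hBsubS : B ⊆ S := by
          rwa [← Finset.sdiff_eq_empty_iff_subset]
        have hSE : S ⊆ E := by
          intro i hi
          rw [hS, Finset.mem_filter] at hi
          rw [hE, Finset.mem_filter]
          exact ⟨Finset.mem_univ _, hi.2⟩
        have h1 : B.card ≤ E.card := Finset.card_le_card (hBsubS.trans hSE)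
        have h2 : 1 ≤ B.card := by
          rw [hBcard]
          omega
        omega
      have hsqle : sq ^ 2 ≤ KQ - (kβ : ℝ) := by
        have h1 : sq ^ 2 ≤ ((kq - kβ : ℕ) : ℝ) := by
          rw [hsq]
          exact sigmaSMin_sq_le_card A hrow d hd (le_trans (Nat.sub_le _ _) hkqm)
        rw [Nat.cast_sub (by omega)] at h1
        rw [hKQ]
        exact h1
      have hs0le : s0 ^ 2 ≤ KQ₀ - (kβ : ℝ) := by
        have h1 : s0 ^ 2 ≤ ((kq₀ - kβ : ℕ) : ℝ) := by
          rw [hs0]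
          exact sigmaSMin_sq_le_card A hrow d hd (by omega)
        rw [Nat.cast_sub (by omega)] at h1
        rw [hKQ₀]
        exact h1
      have hkβ1' : (1:ℝ) ≤ (kβ:ℝ) := by exact_mod_cast hkβ1
      rw [← hkq, hm2]
      have hKKpos : (0:ℝ) < KQ₀ * KQ := mul_pos hKQ₀pos hKQpos
      have hfac : 0 ≤ 1 - sq ^ 2 / KQ - s0 ^ 2 / (KQ₀ * KQ) := by
        rw [sub_sub, sub_nonneg, div_add_div _ _ (ne_of_gt hKQpos) (ne_of_gt hKKpos),
          div_le_one (mul_pos hKQpos hKKpos)]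
        have t1 : sq ^ 2 * (KQ₀ * KQ) ≤ (KQ - (kβ:ℝ)) * (KQ₀ * KQ) :=
          mul_le_mul_of_nonneg_right hsqle hKKpos.le
        have t2 : KQ * s0 ^ 2 ≤ KQ * (KQ₀ - (kβ:ℝ)) :=
          mul_le_mul_of_nonneg_left hs0le hKQpos.le
        have t3 : 0 ≤ ((kβ:ℝ) - 1) * (KQ₀ * KQ) :=
          mul_nonneg (by linarith) hKKpos.le
        have t4 : 0 ≤ KQ * (kβ:ℝ) :=
          mul_nonneg hKQpos.le (by linarith)
        linarith [t1, t2, t3, t4]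
      have hDnn : 0 ≤ D := hDpos.le
      exact mul_nonneg hfac hDnn
    · have hCpos : (0:ℝ) < C := by
        rw [hC]
        exact_mod_cast Nat.pos_of_ne_zero hCzero
      have hterm : ∀ i ∈ B \ S, ‖(xk + resid A b xk i • row A i) - xstar‖ ^ 2
          = D - resid A b xk i ^ 2 := by
        intro i hi
        have hri : resid A b xk i = inner ℝ (row A i) (xstar - xk) := by
          rw [resid_clean A xstar xk bt b ξ hsol hb i (hcleanBS i hi)]
          exact (inner_row A i (xstar - xk)).symm
        rw [norm_step A hrow xstar xk i _ hri, ← hDdef]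
      rw [Finset.sum_congr rfl hterm, Finset.sum_sub_distrib, Finset.sum_const,
        nsmul_eq_mul, ← hT, ← hkq, hm2]
      have h1 : (1 / C) * (C * D - T) = (C * D - T) / C := by ring
      have hKQne : KQ ≠ 0 := ne_of_gt hKQpos
      have hKQ₀ne : KQ₀ ≠ 0 := ne_of_gt hKQ₀pos
      have h2 : (1 - sq ^ 2 / KQ - s0 ^ 2 / (KQ₀ * KQ)) * D
          = ((KQ₀ * KQ - KQ₀ * sq ^ 2 - s0 ^ 2) * D) / (KQ₀ * KQ) := by
        field_simp
      rw [← hC, h1, h2, div_le_div_iff₀ hCpos (mul_pos hKQ₀pos hKQpos)]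
      linarith [main0]
end
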